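/- arXiv:1701.07324 — 7 statements merged into one kernel-verified Lean document; each statement's English description precedes it below -/
import Mathlib

section
/- Let D and D' be division rings and let m, n, m', n' ≥ 1 be integers. Put s = max{m, n} and k = max{m', n'}. Then there exists a graph homomorphism from D^{m×n} to D'^{m'×n'} if and only if |D|^s ≤ |D'|^k, where |D|^s and |D'|^k denote cardinal exponentiation. -/
open Matrix

/-- Rank of a matrix over a division ring: dimension of the left row space. -/
noncomputable def mrank {D : Type} [DivisionRing D] {m n : ℕ} (A : Matrix (Fin m) (Fin n) D) : ℕ :=
  Module.finrank D (Submodule.span D (Set.range fun i : Fin m => fun j : Fin n => A i j))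

section Helpers


variable {D : Type} [DivisionRing D] {m n : ℕ}

lemma mrank_eq_one_iff {A : Matrix (Fin m) (Fin n) D} :
    mrank A = 1 ↔ ∃ (x : Fin m → D) (c : Fin n → D),
      x ≠ 0 ∧ c ≠ 0 ∧ ∀ i j, A i j = x i * c j := by
  constructor
  · intro h
    unfold mrank at h
    set S := Submodule.span D (Set.range fun i : Fin m => fun j : Fin n => A i j) with hS
    obtain ⟨v, hv0, hv⟩ := (finrank_eq_one_iff' (K := D) (V := S)).mp h
    have hrow : ∀ i, (fun j => A i j) ∈ S := fun i => Submodule.subset_span ⟨i, rfl⟩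
    choose x hx using fun i => hv ⟨fun j => A i j, hrow i⟩
    have hxrow : ∀ i, (fun j => A i j) = x i • (v : Fin n → D) := by
      intro i
      have := congrArg (Subtype.val) (hx i)
      simpa using this.symm
    refine ⟨x, (v : Fin n → D), ?_, ?_, ?_⟩
    · rintro rfl
      have hz : ∀ i, (fun j => A i j) = 0 := by
        intro i; rw [hxrow i]; simp
      have : S = ⊥ := by
        rw [hS, Submodule.span_eq_bot]
        rintro y ⟨i, rfl⟩
        exact hz i
      rw [this] at h
      simpa using h
    · simpa using hv0
    · intro i j
      have := congrFun (hxrow i) j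
      simpa using this
  · rintro ⟨x, c, hx, hc, hA⟩
    obtain ⟨i₀, hi₀⟩ := Function.ne_iff.mp hx
    have hrow : ∀ i, (fun j => A i j) = x i • c := by
      intro i; funext j; simp [hA i j]
    have h1 : (Set.range fun i : Fin m => fun j : Fin n => A i j) ⊆
        (Submodule.span D {c} : Submodule D (Fin n → D)) := by
      rintro y ⟨i, rfl⟩
      show (fun j => A i j) ∈ _
      rw [hrow i]
      exact Submodule.smul_mem _ _ (Submodule.mem_span_singleton_self c)
    have h2 : c ∈ Submodule.span D (Set.range fun i : Fin m => fun j : Fin n => A i j) := by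
      have hmem : (fun j => A i₀ j) ∈ Submodule.span D
          (Set.range fun i : Fin m => fun j : Fin n => A i j) :=
        Submodule.subset_span ⟨i₀, rfl⟩
      have := Submodule.smul_mem _ (x i₀)⁻¹ hmem
      rwa [hrow i₀, smul_smul, inv_mul_cancel₀ (by simpa using hi₀), one_smul] at this
    have hspan : Submodule.span D (Set.range fun i : Fin m => fun j : Fin n => A i j) =
        Submodule.span D {c} := by
      refine le_antisymm (Submodule.span_le.mpr h1) (Submodule.span_le.mpr ?_)
      simpa using h2
    unfold mrank
    rw [hspan]
    exact finrank_span_singleton hc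

lemma ne_of_mrank_sub_eq_one {X Y : Matrix (Fin m) (Fin n) D} (h : mrank (X - Y) = 1) :
    X ≠ Y := by
  rintro rfl
  rw [sub_self] at h
  obtain ⟨x, c, hx, hc, hA⟩ := mrank_eq_one_iff.mp h
  obtain ⟨i, hi⟩ := Function.ne_iff.mp hx
  obtain ⟨j, hj⟩ := Function.ne_iff.mp hc
  have := hA i j
  simp only [Matrix.zero_apply] at this
  exact mul_ne_zero (by simpa using hi) (by simpa using hj) this.symm


lemma indep_aux {c₁ c₂ : Fin n → D} (hc₁ : c₁ ≠ 0) (hind : ¬ ∃ μ : D, c₂ = μ • c₁)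
    {a b : D} (h : ∀ j, a * c₁ j + b * c₂ j = 0) : a = 0 ∧ b = 0 := by
  have hb : b = 0 := by
    by_contra hb
    refine hind ⟨-(b⁻¹ * a), funext fun j => ?_⟩
    have h1 := h j
    have h2 : c₂ j = b⁻¹ * -(a * c₁ j) := by
      have h3 : b * c₂ j = -(a * c₁ j) := by
        rw [eq_neg_iff_add_eq_zero, add_comm]; exact h1
      rw [← h3, ← mul_assoc, inv_mul_cancel₀ hb, one_mul]
    rw [Pi.smul_apply, smul_eq_mul, h2]
    noncomm_ring
  refine ⟨?_, hb⟩
  obtain ⟨j, hj⟩ := Function.ne_iff.mp hc₁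
  have h2 := h j
  rw [hb, zero_mul, add_zero] at h2
  rcases mul_eq_zero.mp h2 with h3 | h3
  · exact h3
  · exact absurd h3 (by simpa using hj)

lemma rank_one_dichotomy {x₁ x₂ : Fin m → D} {c₁ c₂ : Fin n → D}
    (hx₁ : x₁ ≠ 0) (hc₁ : c₁ ≠ 0)
    (A : Matrix (Fin m) (Fin n) D) (hA : ∀ i j, A i j = x₁ i * c₁ j - x₂ i * c₂ j)
    (h : mrank A = 1) :
    (∃ μ : D, x₂ = fun i => x₁ i * μ) ∨ (∃ μ : D, c₂ = μ • c₁) := by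
  by_cases hdep : ∃ μ : D, c₂ = μ • c₁
  · exact Or.inr hdep
  left
  obtain ⟨x, c, hx, hc, hx'⟩ := mrank_eq_one_iff.mp h
  obtain ⟨i₀, hi₀'⟩ := Function.ne_iff.mp hx
  have hi₀ : x i₀ ≠ 0 := by simpa using hi₀'
  set a := (x i₀)⁻¹ * x₁ i₀ with ha
  set b := -((x i₀)⁻¹ * x₂ i₀) with hb
  have hcj : ∀ j, c j = a * c₁ j + b * c₂ j := by
    intro j
    have h1 : x i₀ * c j = x₁ i₀ * c₁ j - x₂ i₀ * c₂ j := by rw [← hx' i₀ j, hA i₀ j]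
    have h2 : c j = (x i₀)⁻¹ * (x₁ i₀ * c₁ j - x₂ i₀ * c₂ j) := by
      rw [← h1, ← mul_assoc, inv_mul_cancel₀ hi₀, one_mul]
    rw [h2, ha, hb]
    noncomm_ring
  have key : ∀ i, x₁ i = x i * a ∧ x₂ i = -(x i * b) := by
    intro i
    have h3 := indep_aux hc₁ hdep (a := x₁ i - x i * a) (b := -(x₂ i) - x i * b) (fun j => by
      have e2 : x i * (a * c₁ j + b * c₂ j) = x₁ i * c₁ j - x₂ i * c₂ j := by
        rw [← hcj j, ← hx' i j, hA i j]
      calc (x₁ i - x i * a) * c₁ j + (-(x₂ i) - x i * b) * c₂ j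
          = (x₁ i * c₁ j - x₂ i * c₂ j) - x i * (a * c₁ j + b * c₂ j) := by noncomm_ring
        _ = 0 := by rw [e2, sub_self])
    exact ⟨sub_eq_zero.mp h3.1, by
      have := h3.2
      have h4 : -(x₂ i) = x i * b := by
        have := sub_eq_zero.mp this
        exact this
      rw [← h4, neg_neg]⟩
  have hane : a ≠ 0 := by
    intro h0
    apply hx₁
    funext i
    show x₁ i = 0
    rw [(key i).1, h0, mul_zero]
  refine ⟨-(a⁻¹ * b), funext fun i => ?_⟩
  have h5 : x i = x₁ i * a⁻¹ := by
    rw [(key i).1, mul_assoc, mul_inv_cancel₀ hane, mul_one]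
  rw [(key i).2, h5]
  noncomm_ring

lemma clique_bound {α : Type} (f : α → Matrix (Fin m) (Fin n) D)
    (hf : ∀ a b, a ≠ b → mrank (f a - f b) = 1) :
    Cardinal.mk α ≤ max (Cardinal.mk (Fin m → D)) (Cardinal.mk (Fin n → D)) := by
  by_cases hsub : ∀ a b : α, a = b
  · have h1 : Cardinal.mk α ≤ 1 := Cardinal.le_one_iff_subsingleton.mpr ⟨hsub⟩
    have h2 : (1 : Cardinal) ≤ Cardinal.mk (Fin m → D) :=
      Cardinal.one_le_iff_ne_zero.mpr (Cardinal.mk_ne_zero _)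
    exact h1.trans (h2.trans (le_max_left _ _))
  push_neg at hsub
  obtain ⟨a', b', hab'⟩ := hsub
  set a₀ := a' with ha₀
  have finj : Function.Injective f := by
    intro a b hab
    by_contra hne
    exact ne_of_mrank_sub_eq_one (hf a b hne) hab
  have hdata : ∀ a : α, a ≠ a₀ → ∃ (x : Fin m → D) (c : Fin n → D),
      x ≠ 0 ∧ c ≠ 0 ∧ ∀ i j, (f a - f a₀) i j = x i * c j :=
    fun a ha => mrank_eq_one_iff.mp (hf a a₀ ha)
  choose! X C hX hC hXC using hdata
  -- an element distinct from a₀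
  have hex : ∃ a₁ : α, a₁ ≠ a₀ := ⟨b', fun h => hab' h.symm⟩
  by_cases hCdep : ∀ a, a ≠ a₀ → ∀ b, b ≠ a₀ → ∃ μ : D, C b = μ • C a
  · obtain ⟨a₁, ha₁⟩ := hex
    set c₀ := C a₁ with hc₀def
    have hc₀ : c₀ ≠ 0 := hC a₁ ha₁
    obtain ⟨j₀, hj₀'⟩ := Function.ne_iff.mp hc₀
    have hj₀ : c₀ j₀ ≠ 0 := by simpa using hj₀'
    set g : α → (Fin m → D) := fun a i => (f a - f a₀) i j₀ * (c₀ j₀)⁻¹ with hg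
    have key : ∀ a i j, (f a - f a₀) i j = g a i * c₀ j := by
      intro a i j
      by_cases ha : a = a₀
      · subst ha
        simp [hg, a₀]
      · obtain ⟨μ, hμ⟩ := hCdep a₁ ha₁ a ha
        have h1 : ∀ j, (f a - f a₀) i j = X a i * μ * c₀ j := by
          intro j
          rw [hXC a ha i j, hμ]
          simp [mul_assoc, c₀]
        have hgai : g a i = X a i * μ := by
          show (f a - f a₀) i j₀ * (c₀ j₀)⁻¹ = X a i * μ
          rw [h1 j₀, mul_assoc, mul_inv_cancel₀ hj₀, mul_one]
        rw [h1 j, hgai, mul_assoc]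
    have ginj : Function.Injective g := by
      intro a b hab
      apply finj
      have h3 : f a - f a₀ = f b - f a₀ := by
        funext i j
        rw [key a i j, key b i j, hab]
      exact sub_left_injective h3
    exact le_max_of_le_left (Cardinal.mk_le_of_injective ginj)
  · push_neg at hCdep
    obtain ⟨a₁, ha₁, a₂, ha₂, hC12⟩ := hCdep
    have dich : ∀ e e', e ≠ a₀ → e' ≠ a₀ → e ≠ e' →
        (∃ μ : D, X e' = fun i => X e i * μ) ∨ (∃ μ : D, C e' = μ • C e) := by
      intro e e' he he' hee
      refine rank_one_dichotomy (hX e he) (hC e he) (f e - f e') (fun i j => ?_)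
        (hf e e' hee)
      have : (f e - f e') i j = (f e - f a₀) i j - (f e' - f a₀) i j := by
        simp [Matrix.sub_apply]
      rw [this, hXC e he i j, hXC e' he' i j]
    have hne12 : a₁ ≠ a₂ := by
      rintro rfl
      exact hC12 1 (one_smul D (C a₁)).symm
    have hX12 : ∃ μ : D, X a₂ = fun i => X a₁ i * μ := by
      rcases dich a₁ a₂ ha₁ ha₂ hne12 with h | h
      · exact h
      · exact absurd h (by simpa using hC12)
    have hXdep : ∀ a, a ≠ a₀ → ∃ μ : D, X a = fun i => X a₁ i * μ := by
      intro a ha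
      by_cases h1 : a = a₁
      · subst h1; exact ⟨1, funext fun i => (mul_one _).symm⟩
      by_cases h2 : a = a₂
      · subst h2; exact hX12
      rcases dich a₁ a ha₁ ha (fun h => h1 h.symm) with h | hca₁
      · exact h
      rcases dich a₂ a ha₂ ha (fun h => h2 h.symm) with ⟨μ', hμ'⟩ | hca₂
      · obtain ⟨ν, hν⟩ := hX12
        exact ⟨ν * μ', by rw [hμ', hν]; funext i; simp [mul_assoc]⟩
      · exfalso
        obtain ⟨μ, hμ⟩ := hca₁
        obtain ⟨μ'', hμ''⟩ := hca₂
        have hμ''ne : μ'' ≠ 0 := by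
          rintro rfl
          rw [zero_smul] at hμ''
          exact hC a ha hμ''
        apply hC12 (μ''⁻¹ * μ)
        rw [← smul_smul, ← hμ]
        rw [hμ''] at hμ ⊢
        rw [smul_smul, inv_mul_cancel₀ hμ''ne, one_smul]
    -- now injection into row functions
    have hx₀ : X a₁ ≠ 0 := hX a₁ ha₁
    obtain ⟨i₀, hi₀'⟩ := Function.ne_iff.mp hx₀
    have hi₀ : X a₁ i₀ ≠ 0 := by simpa using hi₀'
    set g : α → (Fin n → D) := fun a j => (X a₁ i₀)⁻¹ * (f a - f a₀) i₀ j with hg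
    have key : ∀ a i j, (f a - f a₀) i j = X a₁ i * g a j := by
      intro a i j
      by_cases ha : a = a₀
      · subst ha; simp [hg, a₀]
      · obtain ⟨μ, hμ⟩ := hXdep a ha
        have h1 : ∀ i j, (f a - f a₀) i j = X a₁ i * (μ * C a j) := by
          intro i j
          rw [hXC a ha i j, hμ]
          simp [mul_assoc]
        have hgaj : g a j = μ * C a j := by
          show (X a₁ i₀)⁻¹ * (f a - f a₀) i₀ j = μ * C a j
          rw [h1 i₀ j, ← mul_assoc, inv_mul_cancel₀ hi₀, one_mul]
        rw [h1 i j, hgaj]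
    have ginj : Function.Injective g := by
      intro a b hab
      apply finj
      have h3 : f a - f a₀ = f b - f a₀ := by
        funext i j
        rw [key a i j, key b i j, hab]
      exact sub_left_injective h3
    exact le_max_of_le_right (Cardinal.mk_le_of_injective ginj)

lemma row_clique (hm : 1 ≤ m) :
    ∃ g : (Fin n → D) → Matrix (Fin m) (Fin n) D,
      ∀ v w, v ≠ w → mrank (g v - g w) = 1 := by
  refine ⟨fun v => Matrix.of fun i j => if i = ⟨0, hm⟩ then v j else 0, fun v w hvw => ?_⟩
  refine mrank_eq_one_iff.mpr ⟨(fun i => if i = ⟨0, hm⟩ then 1 else 0), v - w, ?_,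
    sub_ne_zero.mpr hvw, fun i j => ?_⟩
  · intro h0
    have := congrFun h0 ⟨0, hm⟩
    simp at this
  · by_cases hi : i = ⟨0, hm⟩ <;> simp [Matrix.sub_apply, hi]

lemma col_clique (hn : 1 ≤ n) :
    ∃ g : (Fin m → D) → Matrix (Fin m) (Fin n) D,
      ∀ v w, v ≠ w → mrank (g v - g w) = 1 := by
  refine ⟨fun u => Matrix.of fun i j => if j = ⟨0, hn⟩ then u i else 0, fun v w hvw => ?_⟩
  refine mrank_eq_one_iff.mpr ⟨v - w, (fun j => if j = ⟨0, hn⟩ then 1 else 0),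
    sub_ne_zero.mpr hvw, ?_, fun i j => ?_⟩
  · intro h0
    have := congrFun h0 ⟨0, hn⟩
    simp at this
  · by_cases hj : j = ⟨0, hn⟩ <;> simp [Matrix.sub_apply, hj]

lemma exists_clique (hm : 1 ≤ m) (hn : 1 ≤ n) :
    ∃ g : (Fin (max m n) → D) → Matrix (Fin m) (Fin n) D,
      ∀ v w, v ≠ w → mrank (g v - g w) = 1 := by
  rcases le_total m n with h | h
  · rw [Nat.max_eq_right h]
    exact row_clique hm
  · rw [Nat.max_eq_left h]
    exact col_clique hn

lemma mk_fun_fin (t : ℕ) (K : Type) : Cardinal.mk (Fin t → K) = Cardinal.mk K ^ (t : Cardinal) := by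
  rw [← Cardinal.power_def, Cardinal.mk_fin]

lemma necessity {D D' : Type} [DivisionRing D] [DivisionRing D'] {m n m' n' : ℕ}
    (hm : 1 ≤ m) (hn : 1 ≤ n) (hm' : 1 ≤ m') (hn' : 1 ≤ n')
    (φ : Matrix (Fin m) (Fin n) D → Matrix (Fin m') (Fin n') D')
    (hφ : ∀ X Y, mrank (X - Y) = 1 → mrank (φ X - φ Y) = 1) :
    Cardinal.mk D ^ ((max m n : ℕ) : Cardinal) ≤
      Cardinal.mk D' ^ ((max m' n' : ℕ) : Cardinal) := by
  obtain ⟨g, hg⟩ := exists_clique (D := D) hm hn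
  have hbound := clique_bound (fun v => φ (g v)) (fun v w hvw => hφ _ _ (hg v w hvw))
  rw [mk_fun_fin] at hbound
  refine hbound.trans (max_le ?_ ?_)
  · rw [mk_fun_fin]
    exact Cardinal.power_le_power_left (Cardinal.mk_ne_zero _)
      (by exact_mod_cast Nat.cast_le.mpr (le_max_left m' n'))
  · rw [mk_fun_fin]
    exact Cardinal.power_le_power_left (Cardinal.mk_ne_zero _)
      (by exact_mod_cast Nat.cast_le.mpr (le_max_right m' n'))

open Polynomial in
lemma exists_finext (K : Type) [Field K] [Fintype K] (s : ℕ) (hs : s ≠ 0) :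
    ∃ (F : Type) (_ : Field F) (_ : Algebra K F),
      Module.Finite K F ∧ Module.finrank K F = s := by
  classical
  obtain ⟨p, hcp⟩ := CharP.exists K
  haveI : CharP K p := hcp
  have hp : p.Prime := CharP.char_is_prime K p
  haveI : Fact p.Prime := ⟨hp⟩
  obtain ⟨a, hpa, hcard⟩ := FiniteField.card K p
  set N := (a : ℕ) * s with hN
  have hN0 : N ≠ 0 := Nat.mul_ne_zero (by positivity) hs
  set g : K[X] := X ^ p ^ N - X with hg
  refine ⟨g.SplittingField, inferInstance, inferInstance, inferInstance, ?_⟩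
  set F := g.SplittingField with hF
  haveI : Module.Finite K F := inferInstance
  haveI : Finite F := Module.finite_of_finite K
  haveI : Fintype F := Fintype.ofFinite F
  have hp1 : 1 < p := hp.one_lt
  have aux : g ≠ 0 := FiniteField.X_pow_card_pow_sub_X_ne_zero _ hN0 hp1
  have hsep : g.Separable := galois_poly_separable p (p ^ N) (dvd_pow_self p hN0)
  have key : Fintype.card (g.rootSet F) = g.natDegree :=
    card_rootSet_eq_natDegree hsep (SplittingField.splits g)
  have ndeg : g.natDegree = p ^ N := FiniteField.X_pow_card_pow_sub_X_natDegree_eq _ hN0 hp1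
  rw [ndeg] at key
  have huniv : g.rootSet F = Set.univ := by
    rw [Set.eq_univ_iff_forall]
    suffices h : ∀ (x : F) (_ : x ∈ (⊤ : Subalgebra K F)), x ∈ g.rootSet F by
      intro x; exact h x trivial
    rw [← SplittingField.adjoin_rootSet]
    simp_rw [Algebra.mem_adjoin_iff]
    intro x hx
    refine Subring.closure_induction ?_ ?_ ?_ ?_ ?_ ?_ hx <;> simp_rw [mem_rootSet_of_ne aux]
    · rintro x (⟨r, rfl⟩ | hx)
      · simp only [g, map_sub, map_pow, aeval_X]
        rw [← map_pow]
        have : r ^ p ^ N = r := by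
          rw [hN, pow_mul, ← hcard]
          exact FiniteField.pow_card_pow _ _
        rw [this, sub_self]
      · rwa [mem_rootSet_of_ne aux] at hx
    · rw [← coeff_zero_eq_aeval_zero']
      simp only [g, coeff_X_pow, coeff_X_zero, sub_zero, _root_.map_eq_zero, ite_eq_right_iff,
        one_ne_zero, coeff_sub]
      intro hn
      exact Nat.not_lt_zero 1 (eq_zero_of_pow_eq_zero hn.symm ▸ hp1)
    · simp [g]
    · haveI : CharP F p := charP_of_injective_algebraMap (algebraMap K F).injective p
      simp only [g, aeval_X_pow, aeval_X, map_sub, add_pow_char_pow, sub_eq_zero]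
      intro x y _ _ hx hy
      rw [hx, hy]
    · haveI : CharP F p := charP_of_injective_algebraMap (algebraMap K F).injective p
      intro x _ hx
      simp only [g, sub_eq_zero, aeval_X_pow, aeval_X, map_sub, sub_neg_eq_add] at *
      rw [neg_pow, hx, neg_one_pow_char_pow]
      ring
    · simp only [g, aeval_X_pow, aeval_X, map_sub, mul_pow, sub_eq_zero]
      intro x y _ _ hx hy
      rw [hx, hy]
  have hcardF : Fintype.card F = p ^ N := by
    rw [← key]
    simp_rw [huniv]
    exact (Fintype.ofEquiv_card (Equiv.Set.univ F)).symm ▸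
      (Fintype.card_congr (Equiv.Set.univ F)).symm
  have hfin : Fintype.card F = Fintype.card K ^ Module.finrank K F :=
    Module.card_eq_pow_finrank
  rw [hcardF, hcard, ← pow_mul] at hfin
  have := Nat.pow_right_injective hp.two_le hfin
  rw [hN] at this
  exact Nat.eq_of_mul_eq_mul_left (by positivity) this.symm

lemma sum_single_ne_zero {K : Type} [Semiring K] {t u : ℕ} (htu : t ≤ u)
    {x : Fin t → K} (hx : x ≠ 0) :
    (∑ i : Fin t, Pi.single (M := fun _ : Fin u => K) (Fin.castLE htu i) (x i)) ≠ 0 := by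
  classical
  obtain ⟨i₀, hi₀'⟩ := Function.ne_iff.mp hx
  have hi₀ : x i₀ ≠ 0 := by simpa using hi₀'
  intro h0
  have h1 := congrFun h0 (Fin.castLE htu i₀)
  rw [Finset.sum_apply] at h1
  rw [Finset.sum_eq_single i₀] at h1
  · rw [Pi.single_eq_same] at h1
    exact hi₀ (by simpa using h1)
  · intro i _ hi
    apply Pi.single_eq_of_ne
    exact fun h => hi (Fin.castLE_injective htu h).symm
  · intro h; exact absurd (Finset.mem_univ i₀) h

lemma color_aux {K F : Type} [Field K] [Field F] [Algebra K F] {t u : ℕ} (htu : t ≤ u)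
    (ρ : (Fin u → K) ≃ₗ[K] F) :
    ∃ c : (Fin t → (Fin u → K)) → F, ∀ v w : Fin t → (Fin u → K),
      (∃ (x : Fin t → K) (d : Fin u → K), x ≠ 0 ∧ d ≠ 0 ∧
        ∀ i j, v i j - w i j = x i * d j) → c v ≠ c w := by
  classical
  refine ⟨fun v => ∑ i : Fin t, ρ (Pi.single (Fin.castLE htu i) 1) * ρ (v i), ?_⟩
  rintro v w ⟨x, d, hx, hd, hvw⟩
  intro heq
  dsimp only at heq
  have hsub : ∑ i : Fin t, ρ (Pi.single (Fin.castLE htu i) 1) * ρ (v i - w i) = 0 := by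
    have : ∀ i : Fin t, ρ (Pi.single (Fin.castLE htu i) 1) * ρ (v i - w i)
        = ρ (Pi.single (Fin.castLE htu i) 1) * ρ (v i)
          - ρ (Pi.single (Fin.castLE htu i) 1) * ρ (w i) := by
      intro i; rw [map_sub, mul_sub]
    simp_rw [this]
    rw [Finset.sum_sub_distrib, heq, sub_self]
  have hterm : ∀ i : Fin t, ρ (Pi.single (Fin.castLE htu i) 1) * ρ (v i - w i)
      = ρ (Pi.single (Fin.castLE htu i) (x i)) * ρ d := by
    intro i
    have h1 : v i - w i = x i • d := by
      funext j
      rw [Pi.sub_apply, hvw i j, Pi.smul_apply, smul_eq_mul]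
    have h2 : ρ (v i - w i) = x i • ρ d := by rw [h1]; exact _root_.map_smul ρ _ _
    have h4 : x i • (Pi.single (M := fun _ : Fin u => K) (Fin.castLE htu i) (1 : K)) =
        Pi.single (Fin.castLE htu i) (x i) := by
      funext j
      by_cases hj : j = Fin.castLE htu i
      · subst hj; simp
      · simp [Pi.single_eq_of_ne hj]
    have h5 : ρ (Pi.single (Fin.castLE htu i) (x i)) =
        x i • ρ (Pi.single (Fin.castLE htu i) (1 : K)) := by
      rw [← h4]; exact _root_.map_smul ρ _ _
    rw [h2, h5, Algebra.smul_def, Algebra.smul_def]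
    ring
  rw [Finset.sum_congr rfl (fun i _ => hterm i), ← Finset.sum_mul, ← map_sum] at hsub
  rcases mul_eq_zero.mp hsub with h | h
  · have := ρ.map_eq_zero_iff.mp h
    exact sum_single_ne_zero htu hx this
  · exact hd (ρ.map_eq_zero_iff.mp (by simpa using h))

lemma exists_coloring {D : Type} [DivisionRing D] {m n : ℕ} (hm : 1 ≤ m) (hn : 1 ≤ n) :
    ∃ (γ : Type) (c : Matrix (Fin m) (Fin n) D → γ),
      Cardinal.mk γ ≤ Cardinal.mk D ^ ((max m n : ℕ) : Cardinal) ∧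
      ∀ X Y : Matrix (Fin m) (Fin n) D, mrank (X - Y) = 1 → c X ≠ c Y := by
  classical
  by_cases hfinD : Finite D
  · -- D is a finite field by Wedderburn
    haveI := hfinD
    letI : Field D := littleWedderburn D
    haveI : Fintype D := Fintype.ofFinite D
    obtain ⟨F, fF, aF, hFin, hrank⟩ := exists_finext D (max m n) (by omega)
    letI := fF; letI := aF
    haveI := hFin
    have b : Module.Basis (Fin (max m n)) D F := Module.finBasisOfFinrankEq D F hrank
    have ρ : (Fin (max m n) → D) ≃ₗ[D] F := b.equivFun.symm
    have hcardF : Cardinal.mk F ≤ Cardinal.mk D ^ ((max m n : ℕ) : Cardinal) := by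
      rw [← Cardinal.mk_fin (max m n), Cardinal.power_def]
      exact (Cardinal.mk_congr ρ.toEquiv.symm).le
    rcases le_total m n with hmn | hnm
    · -- rows: max = n
      have hmax : max m n = n := Nat.max_eq_right hmn
      obtain ⟨c, hc⟩ := color_aux (K := D) (F := F) (t := m) (u := max m n)
        (by omega) ρ
      refine ⟨F, fun A => c (fun i => fun j => A i (Fin.cast hmax j)), hcardF, ?_⟩
      intro X Y h1
      obtain ⟨x, d, hx, hd, hXY⟩ := mrank_eq_one_iff.mp h1
      refine hc _ _ ⟨x, fun j => d (Fin.cast hmax j), hx, ?_, fun i j => ?_⟩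
      · intro h0
        apply hd
        funext j
        have h2 := congrFun h0 (Fin.cast hmax.symm j)
        have h3 : Fin.cast hmax (Fin.cast hmax.symm j) = j := by ext; simp
        rw [h3] at h2
        simpa using h2
      · have h4 := hXY i (Fin.cast hmax j)
        rw [Matrix.sub_apply] at h4
        exact h4
    · -- columns: max = m
      have hmax : max m n = m := Nat.max_eq_left hnm
      obtain ⟨c, hc⟩ := color_aux (K := D) (F := F) (t := n) (u := max m n)
        (by omega) ρ
      refine ⟨F, fun A => c (fun j => fun i => A (Fin.cast hmax i) j), hcardF, ?_⟩
      intro X Y h1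
      obtain ⟨x, d, hx, hd, hXY⟩ := mrank_eq_one_iff.mp h1
      refine hc _ _ ⟨d, fun i => x (Fin.cast hmax i), hd, ?_, fun j i => ?_⟩
      · intro h0
        apply hx
        funext i
        have h2 := congrFun h0 (Fin.cast hmax.symm i)
        have h3 : Fin.cast hmax (Fin.cast hmax.symm i) = i := by ext; simp
        rw [h3] at h2
        simpa using h2
      · have h4 := hXY (Fin.cast hmax i) j
        rw [Matrix.sub_apply] at h4
        rw [h4, mul_comm]
  · -- D infinite
    haveI : Infinite D := not_finite_iff_infinite.mp hfinD
    refine ⟨Matrix (Fin m) (Fin n) D, id, ?_, fun X Y h1 h2 => ne_of_mrank_sub_eq_one h1 h2⟩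
    have hD : Cardinal.aleph0 ≤ Cardinal.mk D := Cardinal.infinite_iff.mp inferInstance
    have h1 : Cardinal.mk (Matrix (Fin m) (Fin n) D) = Cardinal.mk D ^ ((n * m : ℕ) : Cardinal) := by
      show Cardinal.mk (Fin m → Fin n → D) = _
      rw [← Cardinal.power_def, ← Cardinal.power_def, ← Cardinal.power_mul,
        Cardinal.mk_fin, Cardinal.mk_fin, Nat.cast_mul]
    rw [h1, Cardinal.power_natCast, Cardinal.power_natCast,
      Cardinal.power_nat_eq hD (Nat.one_le_iff_ne_zero.mpr (Nat.mul_ne_zero (by omega) (by omega))),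
      Cardinal.power_nat_eq hD (by omega)]


end Helpers

/-- Theorem 2.8: with `s = max m n` and `k = max m' n'`, there exists a graph homomorphism
from `D^{m×n}` to `D'^{m'×n'}` iff `|D|^s ≤ |D'|^k` (cardinal exponentiation). -/
theorem exists_graph_hom_iff_cardinal_power_le
    {D D' : Type} [DivisionRing D] [DivisionRing D'] {m n m' n' : ℕ}
    (hm : 1 ≤ m) (hn : 1 ≤ n) (hm' : 1 ≤ m') (hn' : 1 ≤ n') :
    (∃ φ : Matrix (Fin m) (Fin n) D → Matrix (Fin m') (Fin n') D',
        ∀ X Y, mrank (X - Y) = 1 → mrank (φ X - φ Y) = 1) ↔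
      Cardinal.mk D ^ ((max m n : ℕ) : Cardinal) ≤
        Cardinal.mk D' ^ ((max m' n' : ℕ) : Cardinal) := by
  constructor
  · rintro ⟨φ, hφ⟩
    exact necessity hm hn hm' hn' φ hφ
  · intro h
    obtain ⟨γ, c, hγ, hc⟩ := exists_coloring (D := D) hm hn
    have hγ' : Cardinal.mk γ ≤ Cardinal.mk (Fin (max m' n') → D') := by
      rw [mk_fun_fin]
      exact hγ.trans h
    obtain ⟨ι⟩ := Cardinal.le_def γ (Fin (max m' n') → D') |>.mp hγ'
    obtain ⟨K, hK⟩ := exists_clique (D := D') hm' hn'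
    refine ⟨fun A => K (ι (c A)), fun X Y h1 => ?_⟩
    exact hK _ _ (fun he => hc X Y h1 (ι.injective he))
end

section
/- Let m, n, m', n' ≥ 2 be integers and let D and D' be division rings such that |D| ≤ |D'| and D is infinite. Then there exists a graph homomorphism φ: D^{m×n} → D'^{m'×n'} whose image φ(D^{m×n}) is an adjacent set (i.e., φ is a colouring). -/
open Matrix

lemma mrank_single {D' : Type} [DivisionRing D'] {m' n' : ℕ} (i0 : Fin m') (j0 : Fin n')
    {c : D'} (hc : c ≠ 0) :
    mrank (fun i j => if i = i0 ∧ j = j0 then c else 0 : Matrix (Fin m') (Fin n') D') = 1 := by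
  set v : Fin n' → D' := fun j => if j = j0 then c else 0 with hv
  have hvne : v ≠ 0 := by
    intro h
    have := congrFun h j0
    simp [hv] at this
    exact hc this
  have hspan : Submodule.span D' (Set.range fun i : Fin m' => fun j : Fin n' =>
      (if i = i0 ∧ j = j0 then c else 0 : D')) = Submodule.span D' {v} := by
    apply le_antisymm
    · rw [Submodule.span_le]
      rintro _ ⟨i, rfl⟩
      show (fun j : Fin n' => (if i = i0 ∧ j = j0 then c else 0 : D')) ∈ _
      by_cases hi : i = i0
      · have h2 : (fun j : Fin n' => (if i = i0 ∧ j = j0 then c else 0 : D')) = v := by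
          funext j; simp [hv, hi]
        rw [h2]
        exact Submodule.subset_span rfl
      · have h2 : (fun j : Fin n' => (if i = i0 ∧ j = j0 then c else 0 : D')) = 0 := by
          funext j; simp [hi]
        rw [h2]
        exact Submodule.zero_mem _
    · rw [Submodule.span_le]
      rintro _ rfl
      have h2 : v = (fun i : Fin m' => fun j : Fin n' =>
          (if i = i0 ∧ j = j0 then c else 0 : D')) i0 := by
        funext j; simp [hv]
      rw [h2]
      exact Submodule.subset_span ⟨i0, rfl⟩
  show Module.finrank D' (Submodule.span D' (Set.range fun i : Fin m' => fun j : Fin n' =>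
      (if i = i0 ∧ j = j0 then c else 0 : D'))) = 1
  rw [hspan, finrank_span_singleton hvne]

/-- Example 2.4: if `|D| ≤ |D'|` and `D` is infinite, there is a colouring from `D^{m×n}` to
`D'^{m'×n'}`, i.e. a graph homomorphism whose image is an adjacent set. -/
theorem exists_colouring_of_infinite
    {D D' : Type} [DivisionRing D] [DivisionRing D'] {m n m' n' : ℕ}
    (hm : 2 ≤ m) (hn : 2 ≤ n) (hm' : 2 ≤ m') (hn' : 2 ≤ n')
    (hcard : Cardinal.mk D ≤ Cardinal.mk D') (hinf : Infinite D) :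
    ∃ φ : Matrix (Fin m) (Fin n) D → Matrix (Fin m') (Fin n') D',
      (∀ X Y, mrank (X - Y) = 1 → mrank (φ X - φ Y) = 1) ∧
      (∀ A ∈ Set.range φ, ∀ B ∈ Set.range φ, A ≠ B → mrank (A - B) = 1) := by
  -- cardinality: there is an injection from matrices into D'
  have hcard2 : Cardinal.mk (Matrix (Fin m) (Fin n) D) ≤ Cardinal.mk D' := by
    have h1 : Cardinal.mk (Matrix (Fin m) (Fin n) D) = Cardinal.mk D ^ (m * n : ℕ) := by
      calc Cardinal.mk (Matrix (Fin m) (Fin n) D)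
          = Cardinal.mk (Fin m × Fin n → D) := by
            exact Equiv.cardinal_eq ((Equiv.curry _ _ _).symm)
        _ = Cardinal.mk D ^ Cardinal.mk (Fin m × Fin n) := (Cardinal.power_def _ _).symm
        _ = Cardinal.mk D ^ (m * n : ℕ) := by
            congr 1
            simp [Cardinal.mk_prod, Cardinal.mk_fin]
    have h2 : Cardinal.mk D ^ (m * n : ℕ) = Cardinal.mk D :=
      Cardinal.power_nat_eq (Cardinal.aleph0_le_mk D) (by nlinarith)
    rw [h1, h2]; exact hcard
  obtain ⟨f⟩ := Cardinal.le_def _ _ |>.mp hcard2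
  set i0 : Fin m' := ⟨0, by omega⟩
  set j0 : Fin n' := ⟨0, by omega⟩
  refine ⟨fun X => fun i j => if i = i0 ∧ j = j0 then f X else 0, ?_, ?_⟩
  · intro X Y hXY
    have hne : X ≠ Y := by
      rintro rfl
      rw [sub_self] at hXY
      have : mrank (0 : Matrix (Fin m) (Fin n) D) = 0 := by
        have : (Set.range fun i : Fin m => fun j : Fin n => (0 : Matrix (Fin m) (Fin n) D) i j)
            = {0} := by
          ext v; constructor
          · rintro ⟨i, rfl⟩; rfl
          · rintro rfl; exact ⟨⟨0, by omega⟩, rfl⟩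
        rw [mrank, this]
        simp
      omega
    have hfne : f X - f Y ≠ 0 := sub_ne_zero.mpr fun h => hne (f.injective h)
    have : ((fun i j => if i = i0 ∧ j = j0 then f X else 0) -
        (fun i j => if i = i0 ∧ j = j0 then f Y else 0) : Matrix (Fin m') (Fin n') D')
        = fun i j => if i = i0 ∧ j = j0 then f X - f Y else 0 := by
      funext i j
      by_cases h : i = i0 ∧ j = j0 <;> simp [Matrix.sub_apply, h]
    refine (congrArg mrank this).trans ?_
    exact mrank_single i0 j0 hfne
  · rintro A ⟨X, rfl⟩ B ⟨Y, rfl⟩ hAB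
    have hne : X ≠ Y := fun h => hAB (by rw [h])
    have hfne : f X - f Y ≠ 0 := sub_ne_zero.mpr fun h => hne (f.injective h)
    have : ((fun i j => if i = i0 ∧ j = j0 then f X else 0) -
        (fun i j => if i = i0 ∧ j = j0 then f Y else 0) : Matrix (Fin m') (Fin n') D')
        = fun i j => if i = i0 ∧ j = j0 then f X - f Y else 0 := by
      funext i j
      by_cases h : i = i0 ∧ j = j0 <;> simp [Matrix.sub_apply, h]
    refine (congrArg mrank this).trans ?_
    exact mrank_single i0 j0 hfne
end

section
/- Let D and D' be division rings, let m, n, m', n' ≥ 2 be integers, and let k be an integer with 1 ≤ k ≤ min{m, n}. Suppose φ: D^{m×n} → D'^{m'×n'} satisfies rank(φ(X) − φ(Y)) = k whenever rank(X − Y) = k, and suppose there is a fixed matrix L ∈ D'^{n'×m'} such that I_{m'} + φ(X)·L is invertible for every X ∈ D^{m×n}. Define θ(X) = (I_{m'} + φ(X)·L)^{-1} φ(X) for X ∈ D^{m×n}. Then rank(θ(X) − θ(Y)) = k whenever rank(X − Y) = k. -/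
set_option maxHeartbeats 1000000

open Matrix

lemma rowspace_mul_le {D : Type} [DivisionRing D] {m p n : ℕ}
    (M : Matrix (Fin m) (Fin p) D) (C : Matrix (Fin p) (Fin n) D) :
    Submodule.span D (Set.range fun i : Fin m => fun j : Fin n => (M * C) i j) ≤
      Submodule.span D (Set.range fun i : Fin p => fun j : Fin n => C i j) := by
  rw [Submodule.span_le]
  rintro _ ⟨i, rfl⟩
  show (fun j : Fin n => (M * C) i j) ∈ _
  have h : (fun j : Fin n => (M * C) i j) = ∑ l : Fin p, M i l • (fun j : Fin n => C l j) := by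
    funext j
    simp [Matrix.mul_apply, Finset.sum_apply]
  rw [h]
  exact Submodule.sum_mem _ fun l _ =>
    Submodule.smul_mem _ _ (Submodule.subset_span ⟨l, rfl⟩)

lemma mrank_inv_mul {D : Type} [DivisionRing D] {m n : ℕ}
    {P P' : Matrix (Fin m) (Fin m) D} (h2 : P' * P = 1) (C : Matrix (Fin m) (Fin n) D) :
    mrank (P * C) = mrank C := by
  unfold mrank
  have hspan : Submodule.span D (Set.range fun i : Fin m => fun j : Fin n => (P * C) i j)
      = Submodule.span D (Set.range fun i : Fin m => fun j : Fin n => C i j) := by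
    refine le_antisymm (rowspace_mul_le _ _) ?_
    have h : C = P' * (P * C) := by
      rw [← Matrix.mul_assoc, h2, Matrix.one_mul]
    nth_rewrite 1 [h]
    exact rowspace_mul_le _ _
  rw [hspan]

lemma mrank_mul_inv {D : Type} [DivisionRing D] {m n : ℕ}
    (C : Matrix (Fin m) (Fin n) D) {Q Q' : Matrix (Fin n) (Fin n) D}
    (h1 : Q * Q' = 1) (h2 : Q' * Q = 1) :
    mrank (C * Q) = mrank C := by
  let e : (Fin n → D) ≃ₗ[D] (Fin n → D) :=
    LinearEquiv.ofLinear Q.vecMulLinear Q'.vecMulLinear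
      (by
        apply LinearMap.ext; intro v
        simp only [LinearMap.comp_apply, Matrix.vecMulLinear_apply, LinearMap.id_apply,
          Matrix.vecMul_vecMul]
        rw [h2, Matrix.vecMul_one])
      (by
        apply LinearMap.ext; intro v
        simp only [LinearMap.comp_apply, Matrix.vecMulLinear_apply, LinearMap.id_apply,
          Matrix.vecMul_vecMul]
        rw [h1, Matrix.vecMul_one])
  unfold mrank
  have hrange : (Set.range fun i : Fin m => fun j : Fin n => (C * Q) i j)
      = (e.toLinearMap : (Fin n → D) →ₗ[D] (Fin n → D)) ''
        (Set.range fun i : Fin m => fun j : Fin n => C i j) := by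
    rw [← Set.range_comp]
    rfl
  rw [hrange, Submodule.span_image, LinearEquiv.finrank_map_eq]

/-- Example 2.5: if `φ` preserves distance `k` and `I + φ(X)·L` is always invertible, then
`θ(X) = (I + φ(X)·L)⁻¹·φ(X)` also preserves distance `k`. -/
theorem distance_k_preserving_of_left_inverse_twist
    {D D' : Type} [DivisionRing D] [DivisionRing D'] {m n m' n' k : ℕ}
    (hm : 2 ≤ m) (hn : 2 ≤ n) (hm' : 2 ≤ m') (hn' : 2 ≤ n')
    (hk1 : 1 ≤ k) (hk2 : k ≤ min m n)
    (φ : Matrix (Fin m) (Fin n) D → Matrix (Fin m') (Fin n') D')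
    (hφ : ∀ X Y, mrank (X - Y) = k → mrank (φ X - φ Y) = k)
    (L : Matrix (Fin n') (Fin m') D')
    (hL : ∀ X, IsUnit (1 + φ X * L)) :
    ∀ X Y, mrank (X - Y) = k →
      mrank (Ring.inverse (1 + φ X * L) * φ X - Ring.inverse (1 + φ Y * L) * φ Y) = k := by
  intro X Y hXY
  set A := φ X with hA
  set B := φ Y with hB
  have hAB : mrank (A - B) = k := hφ X Y hXY
  set iA := Ring.inverse (1 + A * L) with hiA
  set iB := Ring.inverse (1 + B * L) with hiB
  have huAiA : (1 + A * L) * iA = 1 := Ring.mul_inverse_cancel _ (hL X)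
  have hiAuA : iA * (1 + A * L) = 1 := Ring.inverse_mul_cancel _ (hL X)
  have huBiB : (1 + B * L) * iB = 1 := Ring.mul_inverse_cancel _ (hL Y)
  have hiBuB : iB * (1 + B * L) = 1 := Ring.inverse_mul_cancel _ (hL Y)
  -- 1 + L*B is a unit
  have hw : IsUnit (1 + L * B) := by
    refine isUnit_iff_exists.mpr ⟨1 - L * iB * B, ?_, ?_⟩
    · have h : (1 + L * B) * (1 - L * iB * B)
          = 1 + L * B - L * (((1 + B * L) * iB) * B) := by
        simp only [Matrix.mul_add, Matrix.add_mul, Matrix.mul_sub, Matrix.sub_mul,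
          Matrix.mul_one, Matrix.one_mul, Matrix.mul_assoc]
      rw [h, huBiB, Matrix.one_mul, add_sub_cancel_right]
    · have h : (1 - L * iB * B) * (1 + L * B)
          = 1 + L * B - L * ((iB * (1 + B * L)) * B) := by
        simp only [Matrix.mul_add, Matrix.add_mul, Matrix.mul_sub, Matrix.sub_mul,
          Matrix.mul_one, Matrix.one_mul, Matrix.mul_assoc]
        abel
      rw [h, hiBuB, Matrix.one_mul, add_sub_cancel_right]
  set jw := Ring.inverse (1 + L * B) with hjw
  have hwjw : (1 + L * B) * jw = 1 := Ring.mul_inverse_cancel _ hw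
  have hjww : jw * (1 + L * B) = 1 := Ring.inverse_mul_cancel _ hw
  -- iB * B = B * jw
  have e1 : iB * B = B * jw := by
    calc iB * B = iB * B * ((1 + L * B) * jw) := by rw [hwjw, Matrix.mul_one]
    _ = iB * ((1 + B * L) * B) * jw := by
        have h : B * (1 + L * B) = (1 + B * L) * B := by
          simp only [Matrix.mul_add, Matrix.add_mul, Matrix.mul_one, Matrix.one_mul,
            Matrix.mul_assoc]
        rw [← Matrix.mul_assoc, Matrix.mul_assoc iB B, h]
    _ = B * jw := by rw [← Matrix.mul_assoc, hiBuB, Matrix.one_mul]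
  -- key identity
  have h2 : iA * A = iA * (A * (1 + L * B)) * jw := by
    rw [Matrix.mul_assoc iA, Matrix.mul_assoc A, hwjw, Matrix.mul_one]
  have h3 : B * jw = iA * ((1 + A * L) * B) * jw := by
    rw [← Matrix.mul_assoc iA, hiAuA, Matrix.one_mul]
  have key : iA * A - iB * B = iA * (A - B) * jw := by
    calc iA * A - iB * B
        = iA * (A * (1 + L * B)) * jw - iA * ((1 + A * L) * B) * jw := by
          rw [e1, ← h2, ← h3]
    _ = iA * (A * (1 + L * B) - (1 + A * L) * B) * jw := by
          rw [← Matrix.sub_mul, ← Matrix.mul_sub]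
    _ = iA * (A - B) * jw := by
          have h : A * (1 + L * B) - (1 + A * L) * B = A - B := by
            simp only [Matrix.mul_add, Matrix.add_mul, Matrix.mul_one, Matrix.one_mul,
              Matrix.mul_assoc]
            abel
          rw [h]
  rw [key, Matrix.mul_assoc, mrank_inv_mul huAiA, mrank_mul_inv _ hjww hwjw, hAB]
end

section
/- Let D and D' be division rings, let m, n, m', n' ≥ 2 be integers, and let k be an integer with 1 ≤ k ≤ min{m, n}. Suppose φ: D^{m×n} → D'^{m'×n'} satisfies rank(φ(X) − φ(Y)) = k whenever rank(X − Y) = k, and suppose there is a fixed matrix L ∈ D'^{n'×m'} such that I_{n'} + L·φ(X) is invertible for every X ∈ D^{m×n}. Define θ(X) = φ(X)·(I_{n'} + L·φ(X))^{-1} for X ∈ D^{m×n}. Then rank(θ(X) − θ(Y)) = k whenever rank(X − Y) = k. -/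
open Matrix

section aux

variable {K : Type} [DivisionRing K] {p q : ℕ}

private lemma row_mul (P : Matrix (Fin p) (Fin p) K) (M : Matrix (Fin p) (Fin q) K) (i : Fin p) :
    (fun j => (P * M) i j) = ∑ l, P i l • (fun j => M l j) := by
  funext j
  simp [Matrix.mul_apply, Finset.sum_apply]

private lemma span_mul_le (P : Matrix (Fin p) (Fin p) K) (M : Matrix (Fin p) (Fin q) K) :
    Submodule.span K (Set.range fun i : Fin p => fun j : Fin q => (P * M) i j) ≤
      Submodule.span K (Set.range fun i : Fin p => fun j : Fin q => M i j) := by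
  rw [Submodule.span_le]
  rintro _ ⟨i, rfl⟩
  show (fun j => (P * M) i j) ∈ _
  rw [row_mul]
  exact Submodule.sum_mem _ fun l _ =>
    Submodule.smul_mem _ _ (Submodule.subset_span ⟨l, rfl⟩)

private lemma mrank_unit_mul {P : Matrix (Fin p) (Fin p) K} (hP : IsUnit P)
    (M : Matrix (Fin p) (Fin q) K) : mrank (P * M) = mrank M := by
  have h1 := span_mul_le P M
  have h2 := span_mul_le hP.unit⁻¹.val (P * M)
  have h3 : hP.unit⁻¹.val * (P * M) = M := by
    rw [← Matrix.mul_assoc, hP.val_inv_mul, Matrix.one_mul]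
  rw [h3] at h2
  exact le_antisymm (Submodule.finrank_mono h1) (Submodule.finrank_mono h2)

private lemma mrank_mul_unit {Q : Matrix (Fin q) (Fin q) K} (hQ : IsUnit Q)
    (M : Matrix (Fin p) (Fin q) K) : mrank (M * Q) = mrank M := by
  have hQi : hQ.unit⁻¹.val * Q = 1 := hQ.val_inv_mul
  have hQi' : Q * hQ.unit⁻¹.val = 1 := hQ.mul_val_inv
  let e : (Fin q → K) ≃ₗ[K] (Fin q → K) :=
    { toFun := fun v => v ᵥ* Q
      invFun := fun v => v ᵥ* hQ.unit⁻¹.val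
      map_add' := fun v w => by
        funext j
        simp [Matrix.vecMul, dotProduct, add_mul, Finset.sum_add_distrib]
      map_smul' := fun c v => by
        funext j
        simp [Matrix.vecMul, dotProduct, Finset.mul_sum, mul_assoc]
      left_inv := fun v => by
        show (v ᵥ* Q) ᵥ* hQ.unit⁻¹.val = v
        rw [Matrix.vecMul_vecMul, hQi', Matrix.vecMul_one]
      right_inv := fun v => by
        show (v ᵥ* hQ.unit⁻¹.val) ᵥ* Q = v
        rw [Matrix.vecMul_vecMul, hQi, Matrix.vecMul_one] }
  have hrow : (fun i : Fin p => fun j : Fin q => (M * Q) i j) =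
      fun i => e (fun j => M i j) := rfl
  rw [mrank, hrow]
  have himg : Set.range (fun i : Fin p => e (fun j => M i j)) =
      e '' Set.range (fun i : Fin p => fun j => M i j) := by
    rw [← Set.range_comp]; rfl
  rw [himg, ← LinearEquiv.coe_coe, ← Submodule.map_span]
  exact LinearEquiv.finrank_map_eq e _

private lemma isUnit_one_add_swap {p q : ℕ} {a : Matrix (Fin p) (Fin q) K}
    {b : Matrix (Fin q) (Fin p) K} (h : IsUnit (1 + a * b)) : IsUnit (1 + b * a) := by
  set v := h.unit⁻¹.val with hv
  have hv1 : (1 + a * b) * v = 1 := h.mul_val_inv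
  have hv2 : v * (1 + a * b) = 1 := h.val_inv_mul
  have hc1 : v * a + a * (b * (v * a)) = a := by
    have := congrArg (fun Z : Matrix (Fin p) (Fin p) K => Z * a) hv1
    simpa [Matrix.add_mul, Matrix.mul_assoc] using this
  have hc2 : v * a + v * (a * (b * a)) = a := by
    have := congrArg (fun Z : Matrix (Fin p) (Fin p) K => Z * a) hv2
    simpa [Matrix.add_mul, Matrix.mul_add, Matrix.mul_assoc] using this
  refine ⟨⟨1 + b * a, 1 - b * (v * a), ?_, ?_⟩, rfl⟩
  · have : (1 + b * a) * (1 - b * (v * a)) =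
        1 + b * a - b * (v * a + a * (b * (v * a))) := by
      simp only [Matrix.mul_sub, Matrix.add_mul, Matrix.mul_add, Matrix.one_mul,
        Matrix.mul_one, Matrix.mul_assoc]
    rw [this, hc1]
    abel
  · have : (1 - b * (v * a)) * (1 + b * a) =
        1 + b * a - b * (v * a + v * (a * (b * a))) := by
      simp only [Matrix.mul_sub, Matrix.sub_mul, Matrix.add_mul, Matrix.mul_add,
        Matrix.one_mul, Matrix.mul_one, Matrix.mul_assoc]
      abel1
    rw [this, hc2]
    abel

end aux

/-- Example 2.6: if `φ` preserves distance `k` and `I + L·φ(X)` is always invertible, then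
`θ(X) = φ(X)·(I + L·φ(X))⁻¹` also preserves distance `k`. -/
theorem distance_k_preserving_of_right_inverse_twist
    {D D' : Type} [DivisionRing D] [DivisionRing D'] {m n m' n' k : ℕ}
    (hm : 2 ≤ m) (hn : 2 ≤ n) (hm' : 2 ≤ m') (hn' : 2 ≤ n')
    (hk1 : 1 ≤ k) (hk2 : k ≤ min m n)
    (φ : Matrix (Fin m) (Fin n) D → Matrix (Fin m') (Fin n') D')
    (hφ : ∀ X Y, mrank (X - Y) = k → mrank (φ X - φ Y) = k)
    (L : Matrix (Fin n') (Fin m') D')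
    (hL : ∀ X, IsUnit (1 + L * φ X)) :
    ∀ X Y, mrank (X - Y) = k →
      mrank (φ X * Ring.inverse (1 + L * φ X) - φ Y * Ring.inverse (1 + L * φ Y)) = k := by
  intro X Y hXY
  set A := φ X
  set B := φ Y
  have hA : IsUnit (1 + L * A) := hL X
  have hB : IsUnit (1 + L * B) := hL Y
  have hA' : IsUnit (1 + A * L) := isUnit_one_add_swap hA
  have h1 : (1 + A * L) * A = A * (1 + L * A) := by
    rw [Matrix.add_mul, Matrix.mul_add, Matrix.one_mul, Matrix.mul_one, Matrix.mul_assoc]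
  have swap : A * Ring.inverse (1 + L * A) = Ring.inverse (1 + A * L) * A := by
    have h2 := congrArg
      (fun Z => Ring.inverse (1 + A * L) * Z * Ring.inverse (1 + L * A)) h1
    rw [← Matrix.mul_assoc (Ring.inverse (1 + A * L)) (1 + A * L) A,
      Ring.inverse_mul_cancel _ hA', Matrix.one_mul,
      Matrix.mul_assoc (Ring.inverse (1 + A * L)), Matrix.mul_assoc A,
      Ring.mul_inverse_cancel _ hA, Matrix.mul_one] at h2
    exact h2
  have expand : (A - B : Matrix (Fin m') (Fin n') D') =
      A * (1 + L * B) - (1 + A * L) * B := by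
    rw [Matrix.mul_add, Matrix.add_mul, Matrix.mul_one, Matrix.one_mul, Matrix.mul_assoc]
    abel
  have key : A * Ring.inverse (1 + L * A) - B * Ring.inverse (1 + L * B) =
      Ring.inverse (1 + A * L) * (A - B) * Ring.inverse (1 + L * B) := by
    rw [expand, Matrix.mul_sub, Matrix.sub_mul,
      Matrix.mul_assoc (Ring.inverse (1 + A * L)) (A * (1 + L * B)),
      Matrix.mul_assoc A (1 + L * B), Ring.mul_inverse_cancel _ hB, Matrix.mul_one,
      ← Matrix.mul_assoc (Ring.inverse (1 + A * L)) (1 + A * L),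
      Ring.inverse_mul_cancel _ hA', Matrix.one_mul, swap]
  rw [key]
  have hAinv : IsUnit (Ring.inverse (1 + A * L)) := by
    rw [← hA'.unit_spec, Ring.inverse_unit]; exact hA'.unit⁻¹.isUnit
  have hBinv : IsUnit (Ring.inverse (1 + L * B)) := by
    rw [← hB.unit_spec, Ring.inverse_unit]; exact hB.unit⁻¹.isUnit
  rw [mrank_mul_unit hBinv, mrank_unit_mul hAinv]
  exact hφ X Y hXY
end

section
/- Let D and D' be division rings with |D| > |D'| and D infinite, and let m, n, m', n' ≥ 1 be integers. Then there is no graph homomorphism from D^{m×n} to D'^{m'×n'}. -/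
open Matrix

lemma mrank_zero {D : Type} [DivisionRing D] {m n : ℕ} :
    mrank (0 : Matrix (Fin m) (Fin n) D) = 0 := by
  unfold mrank
  have h : Submodule.span D (Set.range fun i : Fin m => fun j : Fin n =>
      (0 : Matrix (Fin m) (Fin n) D) i j) = ⊥ := by
    rw [Submodule.span_eq_bot]
    rintro x ⟨i, rfl⟩
    rfl
  rw [h, finrank_bot]

lemma mrank_std {D : Type} [DivisionRing D] {m n : ℕ} (i₀ : Fin m) (j₀ : Fin n)
    {a : D} (ha : a ≠ 0) :
    mrank (Matrix.single i₀ j₀ a) = 1 := by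
  unfold mrank
  have hrow : (fun j : Fin n => Matrix.single i₀ j₀ a i₀ j) = Pi.single j₀ a := by
    funext j
    simp [Matrix.single, Pi.single_apply, eq_comm]
  have h : Submodule.span D (Set.range fun i : Fin m => fun j : Fin n =>
      Matrix.single i₀ j₀ a i j) = Submodule.span D {Pi.single j₀ a} := by
    apply le_antisymm
    · rw [Submodule.span_le]
      rintro x ⟨i, rfl⟩
      beta_reduce
      by_cases hi : i = i₀
      · subst hi
        rw [hrow]
        exact Submodule.subset_span rfl
      · have : (fun j : Fin n => Matrix.single i₀ j₀ a i j) = 0 := by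
          funext j
          simp [Matrix.single, Ne.symm hi]
        rw [this]
        exact Submodule.zero_mem _
    · rw [Submodule.span_le, Set.singleton_subset_iff]
      rw [← hrow]
      exact Submodule.subset_span ⟨i₀, rfl⟩
  rw [h]
  exact finrank_span_singleton (by
    intro h0
    apply ha
    have := congrFun h0 j₀
    simpa using this)

/-- Example 2.7: if `|D| > |D'|` and `D` is infinite, there is no graph homomorphism from
`D^{m×n}` to `D'^{m'×n'}`. -/
theorem no_graph_hom_of_card_gt
    {D D' : Type} [DivisionRing D] [DivisionRing D'] {m n m' n' : ℕ}
    (hm : 1 ≤ m) (hn : 1 ≤ n) (hm' : 1 ≤ m') (hn' : 1 ≤ n')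
    (hcard : Cardinal.mk D' < Cardinal.mk D) (hinf : Infinite D) :
    ¬ ∃ φ : Matrix (Fin m) (Fin n) D → Matrix (Fin m') (Fin n') D',
        ∀ X Y, mrank (X - Y) = 1 → mrank (φ X - φ Y) = 1 := by
  rintro ⟨φ, hφ⟩
  set i₀ : Fin m := ⟨0, hm⟩
  set j₀ : Fin n := ⟨0, hn⟩
  -- cardinality of the target is less than that of D
  have htarget : Cardinal.mk (Matrix (Fin m') (Fin n') D') < Cardinal.mk D := by
    cases finite_or_infinite D' with
    | inl hfin =>
        have : Finite (Matrix (Fin m') (Fin n') D') := by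
          unfold Matrix
          infer_instance
        exact lt_of_lt_of_le (Cardinal.lt_aleph0_of_finite _) (Cardinal.aleph0_le_mk D)
    | inr hinf' =>
        have h1 : Cardinal.mk (Matrix (Fin m') (Fin n') D') =
            Cardinal.mk (Fin m' × Fin n' → D') := by
          exact Cardinal.mk_congr (Equiv.curry _ _ _).symm
        rw [h1, Cardinal.mk_arrow]
        simp only [Cardinal.lift_id, Cardinal.mk_prod, Cardinal.mk_fin, Cardinal.lift_natCast]
        rw [← Nat.cast_mul, Cardinal.power_natCast, Cardinal.power_nat_eq
          (Cardinal.aleph0_le_mk D') (Nat.one_le_iff_ne_zero.2 (by positivity))]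
        exact hcard
  -- the map a ↦ φ (a • E) cannot be injective
  have hninj : ¬ Function.Injective
      (fun a : D => φ (Matrix.single i₀ j₀ a)) := by
    intro hinj
    exact absurd (Cardinal.mk_le_of_injective hinj) (not_le.2 htarget)
  rw [Function.not_injective_iff] at hninj
  obtain ⟨a, b, hab, hne⟩ := hninj
  have hX : mrank (Matrix.single i₀ j₀ a - Matrix.single i₀ j₀ b) = 1 := by
    have : Matrix.single i₀ j₀ a - Matrix.single i₀ j₀ b =
        Matrix.single i₀ j₀ (a - b) := by
      funext i j
      simp [Matrix.single]
      split <;> simp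
    rw [this]
    exact mrank_std i₀ j₀ (sub_ne_zero.2 hne)
  have := hφ _ _ hX
  rw [hab, sub_self, mrank_zero] at this
  exact absurd this (by norm_num)
end

section
/- Let D be a division ring, m, n ≥ 2, and let M and N be two distinct maximal sets in D^{m×n} of different types with M ∩ N ≠ ∅. Then for any A ∈ M ∩ N there exist invertible matrices P ∈ GL_m(D) and Q ∈ GL_n(D) such that M = P·M₁·Q + A = P·M₁ + A and N = P·N₁·Q + A = N₁·Q + A. -/
open Matrix

/-- The standard maximal set of type one: matrices whose rows other than the first are zero. -/
def M1set (D : Type) [DivisionRing D] (m n : ℕ) : Set (Matrix (Fin m) (Fin n) D) :=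
  {X | ∀ i j, i.val ≠ 0 → X i j = 0}

/-- The standard maximal set of type two: matrices whose columns other than the first are zero. -/
def N1set (D : Type) [DivisionRing D] (m n : ℕ) : Set (Matrix (Fin m) (Fin n) D) :=
  {X | ∀ i j, j.val ≠ 0 → X i j = 0}

/-- A maximal set of type one: a set of the form `P·M₁ + A` with `P` invertible. -/
def IsTypeOne {D : Type} [DivisionRing D] {m n : ℕ} (S : Set (Matrix (Fin m) (Fin n) D)) : Prop :=
  ∃ P : Matrix (Fin m) (Fin m) D, ∃ A : Matrix (Fin m) (Fin n) D,
    IsUnit P ∧ S = (fun X => P * X + A) '' M1set D m n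

/-- A maximal set of type two: a set of the form `N₁·Q + A` with `Q` invertible. -/
def IsTypeTwo {D : Type} [DivisionRing D] {m n : ℕ} (S : Set (Matrix (Fin m) (Fin n) D)) : Prop :=
  ∃ Q : Matrix (Fin n) (Fin n) D, ∃ A : Matrix (Fin m) (Fin n) D,
    IsUnit Q ∧ S = (fun X => X * Q + A) '' N1set D m n

private lemma M1_mul_right {D : Type} [DivisionRing D] {m n : ℕ}
    {Y : Matrix (Fin m) (Fin n) D} (Q : Matrix (Fin n) (Fin n) D)
    (hY : Y ∈ M1set D m n) : Y * Q ∈ M1set D m n := fun i j h => by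
  simp only [Matrix.mul_apply]
  exact Finset.sum_eq_zero fun k _ => by rw [hY i k h, zero_mul]

private lemma N1_mul_left {D : Type} [DivisionRing D] {m n : ℕ}
    (P : Matrix (Fin m) (Fin m) D) {Y : Matrix (Fin m) (Fin n) D}
    (hY : Y ∈ N1set D m n) : P * Y ∈ N1set D m n := fun i j h => by
  simp only [Matrix.mul_apply]
  exact Finset.sum_eq_zero fun k _ => by rw [hY k j h, mul_zero]

private lemma M1_sub {D : Type} [DivisionRing D] {m n : ℕ}
    {X Y : Matrix (Fin m) (Fin n) D} (hX : X ∈ M1set D m n) (hY : Y ∈ M1set D m n) :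
    X - Y ∈ M1set D m n := fun i j h => by
  simp [Matrix.sub_apply, hX i j h, hY i j h]

private lemma M1_add {D : Type} [DivisionRing D] {m n : ℕ}
    {X Y : Matrix (Fin m) (Fin n) D} (hX : X ∈ M1set D m n) (hY : Y ∈ M1set D m n) :
    X + Y ∈ M1set D m n := fun i j h => by
  simp [Matrix.add_apply, hX i j h, hY i j h]

private lemma N1_sub {D : Type} [DivisionRing D] {m n : ℕ}
    {X Y : Matrix (Fin m) (Fin n) D} (hX : X ∈ N1set D m n) (hY : Y ∈ N1set D m n) :
    X - Y ∈ N1set D m n := fun i j h => by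
  simp [Matrix.sub_apply, hX i j h, hY i j h]

private lemma N1_add {D : Type} [DivisionRing D] {m n : ℕ}
    {X Y : Matrix (Fin m) (Fin n) D} (hX : X ∈ N1set D m n) (hY : Y ∈ N1set D m n) :
    X + Y ∈ N1set D m n := fun i j h => by
  simp [Matrix.add_apply, hX i j h, hY i j h]

/-- Lemma 3.4(i): if `M` and `N` are distinct maximal sets of different types with
`M ∩ N ≠ ∅`, then for any `A ∈ M ∩ N` there are invertible `P`, `Q` with
`M = P·M₁·Q + A = P·M₁ + A` and `N = P·N₁·Q + A = N₁·Q + A`. -/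
theorem maximal_sets_of_different_types
    {D : Type} [DivisionRing D] {m n : ℕ} (hm : 2 ≤ m) (hn : 2 ≤ n)
    (M N : Set (Matrix (Fin m) (Fin n) D))
    (hM : IsTypeOne M) (hN : IsTypeTwo N) (hMN : M ≠ N) (hne : (M ∩ N).Nonempty) :
    ∀ A ∈ M ∩ N,
      ∃ P : Matrix (Fin m) (Fin m) D, ∃ Q : Matrix (Fin n) (Fin n) D,
        IsUnit P ∧ IsUnit Q ∧
        M = (fun X => P * X * Q + A) '' M1set D m n ∧
        M = (fun X => P * X + A) '' M1set D m n ∧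
        N = (fun X => P * X * Q + A) '' N1set D m n ∧
        N = (fun X => X * Q + A) '' N1set D m n := by
  obtain ⟨P, A₀, hP, hMeq⟩ := hM
  obtain ⟨Q, B₀, hQ, hNeq⟩ := hN
  obtain ⟨Pu, rfl⟩ := hP
  obtain ⟨Qu, rfl⟩ := hQ
  set P : Matrix (Fin m) (Fin m) D := Pu.val
  set Q : Matrix (Fin n) (Fin n) D := Qu.val
  set P' : Matrix (Fin m) (Fin m) D := (Pu⁻¹).val
  set Q' : Matrix (Fin n) (Fin n) D := (Qu⁻¹).val
  have hPP' : P * P' = 1 := Pu.mul_inv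
  have hP'P : P' * P = 1 := Pu.inv_mul
  have hQQ' : Q * Q' = 1 := Qu.mul_inv
  have hQ'Q : Q' * Q = 1 := Qu.inv_mul
  intro A hA
  obtain ⟨hAM, hAN⟩ := hA
  rw [hMeq] at hAM
  obtain ⟨X₀, hX₀, hAX⟩ := hAM
  rw [hNeq] at hAN
  obtain ⟨Y₀, hY₀, hAY⟩ := hAN
  simp only at hAX hAY
  have hM2 : M = (fun X => P * X + A) '' M1set D m n := by
    rw [hMeq]
    ext Z
    constructor
    · rintro ⟨Y, hY, rfl⟩
      refine ⟨Y - X₀, M1_sub hY hX₀, ?_⟩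
      show P * (Y - X₀) + A = P * Y + A₀
      rw [← hAX, Matrix.mul_sub]; abel
    · rintro ⟨Y, hY, rfl⟩
      refine ⟨Y + X₀, M1_add hY hX₀, ?_⟩
      show P * (Y + X₀) + A₀ = P * Y + A
      rw [← hAX, Matrix.mul_add]; abel
  have hM1 : M = (fun X => P * X * Q + A) '' M1set D m n := by
    rw [hM2]
    ext Z
    constructor
    · rintro ⟨Y, hY, rfl⟩
      refine ⟨Y * Q', M1_mul_right Q' hY, ?_⟩
      show P * (Y * Q') * Q + A = P * Y + A
      rw [Matrix.mul_assoc, Matrix.mul_assoc, hQ'Q, Matrix.mul_one]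
    · rintro ⟨Y, hY, rfl⟩
      refine ⟨Y * Q, M1_mul_right Q hY, ?_⟩
      show P * (Y * Q) + A = P * Y * Q + A
      rw [Matrix.mul_assoc]
  have hN2 : N = (fun X => X * Q + A) '' N1set D m n := by
    rw [hNeq]
    ext Z
    constructor
    · rintro ⟨Y, hY, rfl⟩
      refine ⟨Y - Y₀, N1_sub hY hY₀, ?_⟩
      show (Y - Y₀) * Q + A = Y * Q + B₀
      rw [← hAY, Matrix.sub_mul]; abel
    · rintro ⟨Y, hY, rfl⟩
      refine ⟨Y + Y₀, N1_add hY hY₀, ?_⟩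
      show (Y + Y₀) * Q + B₀ = Y * Q + A
      rw [← hAY, Matrix.add_mul]; abel
  have hN1 : N = (fun X => P * X * Q + A) '' N1set D m n := by
    rw [hN2]
    ext Z
    constructor
    · rintro ⟨Y, hY, rfl⟩
      refine ⟨P' * Y, N1_mul_left P' hY, ?_⟩
      show P * (P' * Y) * Q + A = Y * Q + A
      rw [← Matrix.mul_assoc, hPP', Matrix.one_mul]
    · rintro ⟨Y, hY, rfl⟩
      exact ⟨P * Y, N1_mul_left P hY, rfl⟩
  exact ⟨P, Q, Pu.isUnit, Qu.isUnit, hM1, hM2, hN1, hN2⟩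
end

section
/- Let D be a division ring, m, n ≥ 2, and let M and N be two distinct maximal sets in D^{m×n} that are both of type one (resp. both of type two) with M ∩ N ≠ ∅. Then M ∩ N = {A} for a single matrix A, and there exists an invertible matrix P ∈ GL_m(D) (resp. Q ∈ GL_n(D)) such that M = P·M₁ + A and N = P·M₂ + A (resp. M = N₁·Q + A and N = N₂·Q + A), where M₂ denotes the set of matrices whose rows other than the second are zero and N₂ the set of matrices whose columns other than the second are zero. -/
open Matrix

/-- Matrices whose rows other than the second are zero. -/
def M2set (D : Type) [DivisionRing D] (m n : ℕ) : Set (Matrix (Fin m) (Fin n) D) :=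
  {X | ∀ i j, i.val ≠ 1 → X i j = 0}

/-- Matrices whose columns other than the second are zero. -/
def N2set (D : Type) [DivisionRing D] (m n : ℕ) : Set (Matrix (Fin m) (Fin n) D) :=
  {X | ∀ i j, j.val ≠ 1 → X i j = 0}

open MulOpposite





/-- Matrix whose rows are a basis (over D, left) of `Fin n → D` is invertible. -/
lemma isUnit_of_rows_basis {D : Type} [DivisionRing D] {n : ℕ}
    (b : Module.Basis (Fin n) D (Fin n → D)) :
    IsUnit (Matrix.of fun j k => b j k : Matrix (Fin n) (Fin n) D) := by
  set P : Matrix (Fin n) (Fin n) D := Matrix.of fun j k => b j k with hP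
  set T : Matrix (Fin n) (Fin n) D := Matrix.of fun k j => b.repr (Pi.single k 1) j with hT
  have hTP : T * P = 1 := by
    ext k l
    have h := congrFun (b.sum_repr (Pi.single k (1:D))) l
    rw [Finset.sum_apply] at h
    simp only [Pi.smul_apply, smul_eq_mul] at h
    simp only [Matrix.mul_apply, hT, hP, Matrix.of_apply, Matrix.one_apply, h,
      Pi.single_apply]
    by_cases hkl : k = l <;> simp [hkl]
    exact fun h' => absurd h'.symm hkl
  have hPT : P * T = 1 := by
    ext j k
    have hb : b j = ∑ l, (fun i => (b j l) * Pi.single (M := fun _ => D) l (1:D) i) := by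
      ext i
      rw [Finset.sum_apply]
      simp [Pi.single_apply, Finset.sum_ite_eq]
    have h := congrArg (fun z => b.repr z k) hb
    have hsm : ∀ l, (fun i => (b j l) * Pi.single (M := fun _ => D) l (1:D) i)
        = ((b j l) • (Pi.single l (1:D) : Fin n → D)) := fun l => rfl
    simp only [hsm, map_sum, _root_.map_smul, Finsupp.coe_finset_sum, Finsupp.coe_smul,
      Finset.sum_apply, Pi.smul_apply, smul_eq_mul, Module.Basis.repr_self] at h
    simp only [Matrix.mul_apply, hT, hP, Matrix.of_apply, Matrix.one_apply]
    rw [← h]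
    simp [Finsupp.single_apply]
  exact ⟨⟨P, T, hPT, hTP⟩, rfl⟩




/-- Matrix whose columns are a basis (over Dᵐᵒᵖ, i.e. right D-structure) of `Fin m → D`
is invertible. -/
lemma isUnit_of_cols_basis {D : Type} [DivisionRing D] {m : ℕ}
    (b : Module.Basis (Fin m) Dᵐᵒᵖ (Fin m → D)) :
    IsUnit (Matrix.of fun i k => b k i : Matrix (Fin m) (Fin m) D) := by
  have hop : ∀ (a : Dᵐᵒᵖ) (x : D), a • x = x * a.unop := fun _ _ => rfl
  set P : Matrix (Fin m) (Fin m) D := Matrix.of fun i k => b k i with hP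
  set T : Matrix (Fin m) (Fin m) D :=
    Matrix.of fun k j => (b.repr (Pi.single j (1:D)) k).unop with hT
  have hPT : P * T = 1 := by
    ext i j
    have h := congrFun (b.sum_repr (Pi.single j (1:D))) i
    rw [Finset.sum_apply] at h
    simp only [Pi.smul_apply, hop] at h
    simp only [Matrix.mul_apply, hT, hP, Matrix.of_apply, Matrix.one_apply, h,
      Pi.single_apply]
  have hTP : T * P = 1 := by
    ext k l
    have hb : b l = ∑ j, (fun i => Pi.single (M := fun _ => D) j (1:D) i * b l j) := by
      ext i
      rw [Finset.sum_apply]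
      simp [Pi.single_apply]
    have hsm : ∀ j, (fun i => Pi.single (M := fun _ => D) j (1:D) i * b l j)
        = ((op (b l j)) • (Pi.single j (1:D) : Fin m → D)) := fun j => rfl
    have h := congrArg (fun z => b.repr z k) hb
    simp only [hsm, map_sum, _root_.map_smul, Finsupp.coe_finset_sum, Finsupp.coe_smul,
      Finset.sum_apply, Pi.smul_apply, smul_eq_mul, Module.Basis.repr_self] at h
    have h2 := congrArg unop h
    simp only [← opAddEquiv_symm_apply, map_sum] at h2
    simp only [opAddEquiv_symm_apply, unop_mul, unop_op] at h2
    simp only [Matrix.mul_apply, hT, hP, Matrix.of_apply, Matrix.one_apply]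
    rw [← h2]
    simp [Finsupp.single_apply]
    by_cases hkl : k = l <;> simp [hkl]
    exact fun h' => absurd h'.symm hkl
  exact ⟨⟨P, T, hPT, hTP⟩, rfl⟩




section Aux
variable {D : Type} [DivisionRing D] {m n : ℕ}

lemma mem_image_row (P : Matrix (Fin m) (Fin m) D) (A Y : Matrix (Fin m) (Fin n) D) (k : Fin m) :
    Y ∈ (fun X => P * X + A) '' {X : Matrix (Fin m) (Fin n) D | ∀ i j, i ≠ k → X i j = 0} ↔
      ∃ x : Fin n → D, ∀ i j, Y i j = P i k * x j + A i j := by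
  constructor
  · rintro ⟨X, hX, rfl⟩
    refine ⟨fun j => X k j, fun i j => ?_⟩
    simp only [Matrix.add_apply, Matrix.mul_apply]
    rw [Finset.sum_eq_single k (fun b _ hbk => by rw [hX b j hbk, mul_zero])
      (fun hk => absurd (Finset.mem_univ k) hk)]
  · rintro ⟨x, hx⟩
    refine ⟨Matrix.of fun i' j' => if i' = k then x j' else 0,
      fun i j hik => by simp [hik], ?_⟩
    ext i j
    rw [hx i j]
    simp [Matrix.add_apply, Matrix.mul_apply, mul_ite, mul_zero, Finset.sum_ite_eq']

lemma mem_image_col (Q : Matrix (Fin n) (Fin n) D) (A Y : Matrix (Fin m) (Fin n) D) (k : Fin n) :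
    Y ∈ (fun X => X * Q + A) '' {X : Matrix (Fin m) (Fin n) D | ∀ i j, j ≠ k → X i j = 0} ↔
      ∃ x : Fin m → D, ∀ i j, Y i j = x i * Q k j + A i j := by
  constructor
  · rintro ⟨X, hX, rfl⟩
    refine ⟨fun i => X i k, fun i j => ?_⟩
    simp only [Matrix.add_apply, Matrix.mul_apply]
    rw [Finset.sum_eq_single k (fun b _ hbk => by rw [hX i b hbk, zero_mul])
      (fun hk => absurd (Finset.mem_univ k) hk)]
  · rintro ⟨x, hx⟩
    refine ⟨Matrix.of fun i' j' => if j' = k then x i' else 0,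
      fun i j hjk => by simp [hjk], ?_⟩
    ext i j
    rw [hx i j]
    simp [Matrix.add_apply, Matrix.mul_apply, ite_mul, zero_mul, Finset.sum_ite_eq']

end Aux




section Aux2
variable {D : Type} [DivisionRing D] {m n : ℕ}

lemma M1set_eq (h : 0 < m) :
    M1set D m n = {X : Matrix (Fin m) (Fin n) D | ∀ i j, i ≠ ⟨0, h⟩ → X i j = 0} := by
  ext X
  simp only [M1set, Set.mem_setOf_eq, Ne, Fin.ext_iff]

lemma M2set_eq (h : 1 < m) :
    M2set D m n = {X : Matrix (Fin m) (Fin n) D | ∀ i j, i ≠ ⟨1, h⟩ → X i j = 0} := by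
  ext X
  simp only [M2set, Set.mem_setOf_eq, Ne, Fin.ext_iff]

lemma N1set_eq (h : 0 < n) :
    N1set D m n = {X : Matrix (Fin m) (Fin n) D | ∀ i j, j ≠ ⟨0, h⟩ → X i j = 0} := by
  ext X
  simp only [N1set, Set.mem_setOf_eq, Ne, Fin.ext_iff]

lemma N2set_eq (h : 1 < n) :
    N2set D m n = {X : Matrix (Fin m) (Fin n) D | ∀ i j, j ≠ ⟨1, h⟩ → X i j = 0} := by
  ext X
  simp only [N2set, Set.mem_setOf_eq, Ne, Fin.ext_iff]

lemma range_pair {V : Type*} (a b : V) : Set.range ![a, b] = {a, b} := by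
  ext z
  constructor
  · rintro ⟨w, rfl⟩
    fin_cases w
    · exact Set.mem_insert _ _
    · exact Set.mem_insert_of_mem _ rfl
  · rintro (rfl | rfl)
    exacts [⟨0, rfl⟩, ⟨1, rfl⟩]

end Aux2

section T2
variable {D : Type} [DivisionRing D] {m n : ℕ}

set_option maxHeartbeats 1000000 in
lemma typeTwo_main (hm : 2 ≤ m) (hn : 2 ≤ n)
    {M N : Set (Matrix (Fin m) (Fin n) D)} (hM : IsTypeTwo M) (hN : IsTypeTwo N)
    (hMN : M ≠ N) (hne : (M ∩ N).Nonempty) :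
    ∃ A : Matrix (Fin m) (Fin n) D, M ∩ N = {A} ∧
      ∃ Q : Matrix (Fin n) (Fin n) D, IsUnit Q ∧
        M = (fun X => X * Q + A) '' N1set D m n ∧
        N = (fun X => X * Q + A) '' N2set D m n := by
  have h0n : 0 < n := by omega
  have h1n : 1 < n := by omega
  set j0 : Fin n := ⟨0, h0n⟩ with hj0
  set j1 : Fin n := ⟨1, h1n⟩ with hj1
  have hj01 : j0 ≠ j1 := by
    intro h
    exact absurd (congrArg Fin.val h) (by norm_num [hj0, hj1])
  obtain ⟨Q, A₀, hQ, hMeq⟩ := hM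
  obtain ⟨Q', A₀', hQ', hNeq⟩ := hN
  set r : Fin n → D := fun j => Q j0 j with hrdef
  set s : Fin n → D := fun j => Q' j0 j with hsdef
  have hmemM : ∀ Y, Y ∈ M ↔ ∃ x : Fin m → D, ∀ i j, Y i j = x i * r j + A₀ i j := by
    intro Y; rw [hMeq, N1set_eq h0n]; exact mem_image_col Q A₀ Y j0
  have hmemN : ∀ Y, Y ∈ N ↔ ∃ y : Fin m → D, ∀ i j, Y i j = y i * s j + A₀' i j := by
    intro Y; rw [hNeq, N1set_eq h0n]; exact mem_image_col Q' A₀' Y j0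
  have rowne : ∀ R : Matrix (Fin n) (Fin n) D, IsUnit R → (fun j => R j0 j) ≠ 0 := by
    intro R hR h0
    obtain ⟨u, hu⟩ := hR
    have h1 := u.mul_inv
    rw [hu] at h1
    have h2 := Matrix.ext_iff.2 h1 j0 j0
    rw [Matrix.mul_apply, Matrix.one_apply_eq] at h2
    rw [Finset.sum_eq_zero (fun k _ => by rw [congrFun h0 k, Pi.zero_apply, zero_mul])] at h2
    exact one_ne_zero h2.symm
  have hr : r ≠ 0 := rowne Q hQ
  have hs : s ≠ 0 := rowne Q' hQ'
  obtain ⟨B, hB⟩ := hne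
  obtain ⟨x₀, hx₀⟩ := (hmemM B).1 hB.1
  obtain ⟨y₀, hy₀⟩ := (hmemN B).1 hB.2
  by_cases hprop : ∃ lam : D, ∀ j, s j = lam * r j
  · exfalso
    apply hMN
    obtain ⟨lam, hlam⟩ := hprop
    have hlam0 : lam ≠ 0 := by
      rintro rfl
      exact hs (funext fun j => by rw [hlam j, zero_mul, Pi.zero_apply])
    have hr' : ∀ j, r j = lam⁻¹ * s j := fun j => by
      rw [hlam j, inv_mul_cancel_left₀ hlam0]
    ext Y
    rw [hmemM, hmemN]
    constructor
    · rintro ⟨x, hx⟩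
      refine ⟨fun i => (x i - x₀ i) * lam⁻¹ + y₀ i, fun i j => ?_⟩
      have hBij : x₀ i * r j + A₀ i j = y₀ i * s j + A₀' i j := by
        rw [← hx₀ i j, ← hy₀ i j]
      have hA0 : A₀ i j = y₀ i * s j + A₀' i j - x₀ i * r j := by
        rw [← hBij]; abel
      rw [hx i j, hA0, hr' j]
      noncomm_ring
    · rintro ⟨y, hy⟩
      refine ⟨fun i => (y i - y₀ i) * lam + x₀ i, fun i j => ?_⟩
      have hBij : x₀ i * r j + A₀ i j = y₀ i * s j + A₀' i j := by
        rw [← hx₀ i j, ← hy₀ i j]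
      have hA0' : A₀' i j = x₀ i * r j + A₀ i j - y₀ i * s j := by
        rw [hBij]; abel
      rw [hy i j, hA0', hlam j]
      noncomm_ring
  · push_neg at hprop
    obtain ⟨jr, hjr⟩ : ∃ j, r j ≠ 0 := Function.ne_iff.mp hr
    set lam : D := s jr * (r jr)⁻¹ with hlamdef
    obtain ⟨jx, hjx⟩ := hprop lam
    have indep : ∀ u v : Fin m → D, (∀ i j, u i * r j = v i * s j) →
        ∀ i, u i = 0 ∧ v i = 0 := by
      intro u v h i
      have h1 : u i = v i * lam := by
        calc u i = u i * r jr * (r jr)⁻¹ := (mul_inv_cancel_right₀ hjr _).symm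
          _ = v i * s jr * (r jr)⁻¹ := by rw [h i jr]
          _ = v i * lam := by rw [hlamdef, mul_assoc]
      have h2 : v i * (lam * r jx - s jx) = 0 := by
        have h3 := h i jx
        rw [h1, mul_assoc] at h3
        rw [mul_sub, h3, sub_self]
      have h4 : lam * r jx - s jx ≠ 0 := sub_ne_zero.mpr (fun h' => hjx h'.symm)
      have h5 : v i = 0 := (mul_eq_zero.mp h2).resolve_right h4
      exact ⟨by rw [h1, h5, zero_mul], h5⟩
    refine ⟨B, ?_, ?_⟩
    · refine (Set.eq_singleton_iff_unique_mem).2 ⟨hB, fun Y hY => ?_⟩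
      obtain ⟨x, hx⟩ := (hmemM Y).1 hY.1
      obtain ⟨y, hy⟩ := (hmemN Y).1 hY.2
      have h : ∀ i j, (x i - x₀ i) * r j = (y i - y₀ i) * s j := by
        intro i j
        have e : x i * r j + A₀ i j - (x₀ i * r j + A₀ i j)
            = y i * s j + A₀' i j - (y₀ i * s j + A₀' i j) := by
          rw [← hx i j, ← hy i j, ← hx₀ i j, ← hy₀ i j]
        rw [add_sub_add_right_eq_sub, add_sub_add_right_eq_sub] at e
        rw [sub_mul, sub_mul]
        exact e
      ext i j
      have hx0 : x i - x₀ i = 0 := (indep _ _ h i).1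
      have hxi : x i = x₀ i := by rwa [sub_eq_zero] at hx0
      rw [hx i j, hxi, ← hx₀ i j]
    · have li : LinearIndependent D ![r, s] := by
        rw [linearIndependent_fin2]
        refine ⟨hs, fun a ha => ?_⟩
        have ha' : ∀ j, r j = a * s j := fun j => (congrFun ha j).symm
        have ha0 : a ≠ 0 := by
          rintro rfl
          exact hr (funext fun j => by rw [ha' j, zero_mul, Pi.zero_apply])
        obtain ⟨j, hj⟩ := hprop a⁻¹
        exact hj (by rw [ha' j, inv_mul_cancel_left₀ ha0])
      have hsub : LinearIndepOn D id ({r, s} : Set (Fin n → D)) := by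
        rw [← range_pair r s]
        exact (linearIndepOn_id_range_iff li.injective).mpr li
      haveI : Fintype ↥(hsub.extend (Set.subset_univ _)) :=
        FiniteDimensional.fintypeBasisIndex (Module.Basis.extend hsub)
      have hcard : Fintype.card ↥(hsub.extend (Set.subset_univ _)) = n := by
        have h1 := Module.finrank_eq_card_basis (Module.Basis.extend hsub)
        rw [Module.finrank_pi] at h1
        simp only [Fintype.card_fin] at h1
        exact h1.symm
      have hrt : r ∈ hsub.extend (Set.subset_univ _) :=
        hsub.subset_extend _ (Set.mem_insert _ _)
      have hst : s ∈ hsub.extend (Set.subset_univ _) :=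
        hsub.subset_extend _ (Set.mem_insert_of_mem _ rfl)
      have hrs : r ≠ s := by
        intro h
        obtain ⟨j, hj⟩ := hprop 1
        exact hj (by rw [one_mul, h])
      set e1 : Fin n ≃ ↥(hsub.extend (Set.subset_univ _)) :=
        (Fintype.equivFinOfCardEq hcard).symm with he1
      set f : Fin n ≃ ↥(hsub.extend (Set.subset_univ _)) :=
        (Equiv.swap j0 (e1.symm ⟨r, hrt⟩)).trans e1 with hf
      have hf0 : f j0 = ⟨r, hrt⟩ := by
        rw [hf, Equiv.trans_apply, Equiv.swap_apply_left, Equiv.apply_symm_apply]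
      set g : Fin n ≃ ↥(hsub.extend (Set.subset_univ _)) :=
        (Equiv.swap j1 (f.symm ⟨s, hst⟩)).trans f with hg
      have hg1 : g j1 = ⟨s, hst⟩ := by
        rw [hg, Equiv.trans_apply, Equiv.swap_apply_left, Equiv.apply_symm_apply]
      have hg0 : g j0 = ⟨r, hrt⟩ := by
        rw [hg, Equiv.trans_apply, Equiv.swap_apply_of_ne_of_ne hj01, hf0]
        intro h
        have h2 : f j0 = ⟨s, hst⟩ := by rw [h, Equiv.apply_symm_apply]
        rw [hf0] at h2
        exact hrs (congrArg Subtype.val h2)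
      set b : Module.Basis (Fin n) D (Fin n → D) := (Module.Basis.extend hsub).reindex g.symm with hbdef
      have hbr : b j0 = r := by
        rw [hbdef, Module.Basis.reindex_apply, Equiv.symm_symm, hg0, Module.Basis.extend_apply_self]
      have hbs : b j1 = s := by
        rw [hbdef, Module.Basis.reindex_apply, Equiv.symm_symm, hg1, Module.Basis.extend_apply_self]
      have hQ0 : ∀ j, (Matrix.of fun p q => b p q : Matrix (Fin n) (Fin n) D) j0 j = r j :=
        fun j => by show b j0 j = r j; rw [hbr]
      have hQ1 : ∀ j, (Matrix.of fun p q => b p q : Matrix (Fin n) (Fin n) D) j1 j = s j :=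
        fun j => by show b j1 j = s j; rw [hbs]
      refine ⟨Matrix.of fun p q => b p q, isUnit_of_rows_basis b, ?_, ?_⟩
      · ext Y
        rw [hmemM Y, N1set_eq h0n, mem_image_col (Matrix.of fun p q => b p q) B Y j0]
        constructor
        · rintro ⟨x, hx⟩
          refine ⟨fun i => x i - x₀ i, fun i j => ?_⟩
          rw [hQ0 j, hx i j, hx₀ i j]
          noncomm_ring
        · rintro ⟨x, hx⟩
          refine ⟨fun i => x i + x₀ i, fun i j => ?_⟩
          rw [hx i j, hQ0 j, hx₀ i j]
          noncomm_ring
      · ext Y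
        rw [hmemN Y, N2set_eq h1n, mem_image_col (Matrix.of fun p q => b p q) B Y j1]
        constructor
        · rintro ⟨y, hy⟩
          refine ⟨fun i => y i - y₀ i, fun i j => ?_⟩
          rw [hQ1 j, hy i j, hy₀ i j]
          noncomm_ring
        · rintro ⟨y, hy⟩
          refine ⟨fun i => y i + y₀ i, fun i j => ?_⟩
          rw [hy i j, hQ1 j, hy₀ i j]
          noncomm_ring

end T2

section T1
variable {D : Type} [DivisionRing D] {m n : ℕ}

/-- Entrywise `op` as a `Dᵐᵒᵖ`-linear equivalence. -/
def opPiEquiv (D : Type) [DivisionRing D] (m : ℕ) :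
    (Fin m → D) ≃ₗ[Dᵐᵒᵖ] (Fin m → Dᵐᵒᵖ) where
  toFun x := fun i => op (x i)
  invFun y := fun i => unop (y i)
  map_add' x y := funext fun i => by simp
  map_smul' a x := rfl
  left_inv x := rfl
  right_inv y := rfl

set_option maxHeartbeats 1000000 in
lemma typeOne_main (hm : 2 ≤ m) (hn : 2 ≤ n)
    {M N : Set (Matrix (Fin m) (Fin n) D)} (hM : IsTypeOne M) (hN : IsTypeOne N)
    (hMN : M ≠ N) (hne : (M ∩ N).Nonempty) :
    ∃ A : Matrix (Fin m) (Fin n) D, M ∩ N = {A} ∧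
      ∃ P : Matrix (Fin m) (Fin m) D, IsUnit P ∧
        M = (fun X => P * X + A) '' M1set D m n ∧
        N = (fun X => P * X + A) '' M2set D m n := by
  have h0m : 0 < m := by omega
  have h1m : 1 < m := by omega
  set i0 : Fin m := ⟨0, h0m⟩ with hi0
  set i1 : Fin m := ⟨1, h1m⟩ with hi1
  have hi01 : i0 ≠ i1 := by
    intro h
    exact absurd (congrArg Fin.val h) (by norm_num [hi0, hi1])
  obtain ⟨P, A₀, hP, hMeq⟩ := hM
  obtain ⟨P', A₀', hP', hNeq⟩ := hN
  set c : Fin m → D := fun i => P i i0 with hcdef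
  set d : Fin m → D := fun i => P' i i0 with hddef
  have hmemM : ∀ Y, Y ∈ M ↔ ∃ x : Fin n → D, ∀ i j, Y i j = c i * x j + A₀ i j := by
    intro Y; rw [hMeq, M1set_eq h0m]; exact mem_image_row P A₀ Y i0
  have hmemN : ∀ Y, Y ∈ N ↔ ∃ y : Fin n → D, ∀ i j, Y i j = d i * y j + A₀' i j := by
    intro Y; rw [hNeq, M1set_eq h0m]; exact mem_image_row P' A₀' Y i0
  have colne : ∀ R : Matrix (Fin m) (Fin m) D, IsUnit R → (fun i => R i i0) ≠ 0 := by
    intro R hR h0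
    obtain ⟨u, hu⟩ := hR
    have h1 := u.inv_mul
    rw [hu] at h1
    have h2 := Matrix.ext_iff.2 h1 i0 i0
    rw [Matrix.mul_apply, Matrix.one_apply_eq] at h2
    rw [Finset.sum_eq_zero (fun k _ => by rw [congrFun h0 k, Pi.zero_apply, mul_zero])] at h2
    exact zero_ne_one h2
  have hc : c ≠ 0 := colne P hP
  have hd : d ≠ 0 := colne P' hP'
  obtain ⟨B, hB⟩ := hne
  obtain ⟨x₀, hx₀⟩ := (hmemM B).1 hB.1
  obtain ⟨y₀, hy₀⟩ := (hmemN B).1 hB.2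
  by_cases hprop : ∃ lam : D, ∀ i, d i = c i * lam
  · exfalso
    apply hMN
    obtain ⟨lam, hlam⟩ := hprop
    have hlam0 : lam ≠ 0 := by
      rintro rfl
      exact hd (funext fun i => by rw [hlam i, mul_zero, Pi.zero_apply])
    have hc' : ∀ i, c i = d i * lam⁻¹ := fun i => by
      rw [hlam i, mul_inv_cancel_right₀ hlam0]
    ext Y
    rw [hmemM, hmemN]
    constructor
    · rintro ⟨x, hx⟩
      refine ⟨fun j => lam⁻¹ * (x j - x₀ j) + y₀ j, fun i j => ?_⟩
      have hBij : c i * x₀ j + A₀ i j = d i * y₀ j + A₀' i j := by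
        rw [← hx₀ i j, ← hy₀ i j]
      have hA0 : A₀ i j = d i * y₀ j + A₀' i j - c i * x₀ j := by
        rw [← hBij]; abel
      rw [hx i j, hA0, hc' i]
      noncomm_ring
    · rintro ⟨y, hy⟩
      refine ⟨fun j => lam * (y j - y₀ j) + x₀ j, fun i j => ?_⟩
      have hBij : c i * x₀ j + A₀ i j = d i * y₀ j + A₀' i j := by
        rw [← hx₀ i j, ← hy₀ i j]
      have hA0' : A₀' i j = c i * x₀ j + A₀ i j - d i * y₀ j := by
        rw [hBij]; abel
      rw [hy i j, hA0', hlam i]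
      noncomm_ring
  · push_neg at hprop
    obtain ⟨ir, hir⟩ : ∃ i, c i ≠ 0 := Function.ne_iff.mp hc
    set lam : D := (c ir)⁻¹ * d ir with hlamdef
    obtain ⟨ix, hix⟩ := hprop lam
    have indep : ∀ u v : Fin n → D, (∀ i j, c i * u j = d i * v j) →
        ∀ j, u j = 0 ∧ v j = 0 := by
      intro u v h j
      have h1 : u j = lam * v j := by
        calc u j = (c ir)⁻¹ * (c ir * u j) := (inv_mul_cancel_left₀ hir _).symm
          _ = (c ir)⁻¹ * (d ir * v j) := by rw [h ir j]
          _ = lam * v j := by rw [hlamdef, mul_assoc]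
      have h2 : (c ix * lam - d ix) * v j = 0 := by
        have h3 := h ix j
        rw [h1, ← mul_assoc] at h3
        rw [sub_mul, h3, sub_self]
      have h4 : c ix * lam - d ix ≠ 0 := sub_ne_zero.mpr (fun h' => hix h'.symm)
      have h5 : v j = 0 := (mul_eq_zero.mp h2).resolve_left h4
      exact ⟨by rw [h1, h5, mul_zero], h5⟩
    refine ⟨B, ?_, ?_⟩
    · refine (Set.eq_singleton_iff_unique_mem).2 ⟨hB, fun Y hY => ?_⟩
      obtain ⟨x, hx⟩ := (hmemM Y).1 hY.1
      obtain ⟨y, hy⟩ := (hmemN Y).1 hY.2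
      have h : ∀ i j, c i * (x j - x₀ j) = d i * (y j - y₀ j) := by
        intro i j
        have e : c i * x j + A₀ i j - (c i * x₀ j + A₀ i j)
            = d i * y j + A₀' i j - (d i * y₀ j + A₀' i j) := by
          rw [← hx i j, ← hy i j, ← hx₀ i j, ← hy₀ i j]
        rw [add_sub_add_right_eq_sub, add_sub_add_right_eq_sub] at e
        rw [mul_sub, mul_sub]
        exact e
      ext i j
      have hx0 : x j - x₀ j = 0 := (indep _ _ h j).1
      have hxj : x j = x₀ j := by rwa [sub_eq_zero] at hx0
      rw [hx i j, hxj, ← hx₀ i j]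
    · have li : LinearIndependent Dᵐᵒᵖ ![c, d] := by
        rw [linearIndependent_fin2]
        refine ⟨hd, fun a ha => ?_⟩
        have ha' : ∀ i, c i = d i * unop a := fun i => (congrFun ha i).symm
        have ha0 : a ≠ 0 := by
          rintro rfl
          exact hc (funext fun i => by rw [ha' i]; simp)
        have hu0 : unop a ≠ 0 := fun h => ha0 (by rw [← op_unop a, h, op_zero])
        obtain ⟨i, hi⟩ := hprop (unop a)⁻¹
        exact hi (by rw [ha' i, mul_inv_cancel_right₀ hu0])
      have hsub : LinearIndepOn Dᵐᵒᵖ id ({c, d} : Set (Fin m → D)) := by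
        rw [← range_pair c d]
        exact (linearIndepOn_id_range_iff li.injective).mpr li
      haveI : Module.Finite Dᵐᵒᵖ (Fin m → D) := Module.Finite.equiv (opPiEquiv D m).symm
      haveI : Fintype ↥(hsub.extend (Set.subset_univ _)) :=
        FiniteDimensional.fintypeBasisIndex (Module.Basis.extend hsub)
      have hcard : Fintype.card ↥(hsub.extend (Set.subset_univ _)) = m := by
        have h1 := Module.finrank_eq_card_basis (Module.Basis.extend hsub)
        rw [(opPiEquiv D m).finrank_eq, Module.finrank_pi, Fintype.card_fin] at h1
        exact h1.symm
      have hct : c ∈ hsub.extend (Set.subset_univ _) :=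
        hsub.subset_extend _ (Set.mem_insert _ _)
      have hdt : d ∈ hsub.extend (Set.subset_univ _) :=
        hsub.subset_extend _ (Set.mem_insert_of_mem _ rfl)
      have hcd : c ≠ d := by
        intro h
        obtain ⟨i, hi⟩ := hprop 1
        exact hi (by rw [mul_one, h])
      set e1 : Fin m ≃ ↥(hsub.extend (Set.subset_univ _)) :=
        (Fintype.equivFinOfCardEq hcard).symm with he1
      set f : Fin m ≃ ↥(hsub.extend (Set.subset_univ _)) :=
        (Equiv.swap i0 (e1.symm ⟨c, hct⟩)).trans e1 with hf
      have hf0 : f i0 = ⟨c, hct⟩ := by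
        rw [hf, Equiv.trans_apply, Equiv.swap_apply_left, Equiv.apply_symm_apply]
      set g : Fin m ≃ ↥(hsub.extend (Set.subset_univ _)) :=
        (Equiv.swap i1 (f.symm ⟨d, hdt⟩)).trans f with hg
      have hg1 : g i1 = ⟨d, hdt⟩ := by
        rw [hg, Equiv.trans_apply, Equiv.swap_apply_left, Equiv.apply_symm_apply]
      have hg0 : g i0 = ⟨c, hct⟩ := by
        rw [hg, Equiv.trans_apply, Equiv.swap_apply_of_ne_of_ne hi01, hf0]
        intro h
        have h2 : f i0 = ⟨d, hdt⟩ := by rw [h, Equiv.apply_symm_apply]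
        rw [hf0] at h2
        exact hcd (congrArg Subtype.val h2)
      set b : Module.Basis (Fin m) Dᵐᵒᵖ (Fin m → D) := (Module.Basis.extend hsub).reindex g.symm with hbdef
      have hbc : b i0 = c := by
        rw [hbdef, Module.Basis.reindex_apply, Equiv.symm_symm, hg0, Module.Basis.extend_apply_self]
      have hbd : b i1 = d := by
        rw [hbdef, Module.Basis.reindex_apply, Equiv.symm_symm, hg1, Module.Basis.extend_apply_self]
      have hP0 : ∀ i, (Matrix.of fun p q => b q p : Matrix (Fin m) (Fin m) D) i i0 = c i :=
        fun i => by show b i0 i = c i; rw [hbc]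
      have hP1 : ∀ i, (Matrix.of fun p q => b q p : Matrix (Fin m) (Fin m) D) i i1 = d i :=
        fun i => by show b i1 i = d i; rw [hbd]
      refine ⟨Matrix.of fun p q => b q p, isUnit_of_cols_basis b, ?_, ?_⟩
      · ext Y
        rw [hmemM Y, M1set_eq h0m, mem_image_row (Matrix.of fun p q => b q p) B Y i0]
        constructor
        · rintro ⟨x, hx⟩
          refine ⟨fun j => x j - x₀ j, fun i j => ?_⟩
          rw [hP0 i, hx i j, hx₀ i j]
          noncomm_ring
        · rintro ⟨x, hx⟩
          refine ⟨fun j => x j + x₀ j, fun i j => ?_⟩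
          rw [hx i j, hP0 i, hx₀ i j]
          noncomm_ring
      · ext Y
        rw [hmemN Y, M2set_eq h1m, mem_image_row (Matrix.of fun p q => b q p) B Y i1]
        constructor
        · rintro ⟨y, hy⟩
          refine ⟨fun j => y j - y₀ j, fun i j => ?_⟩
          rw [hP1 i, hy i j, hy₀ i j]
          noncomm_ring
        · rintro ⟨y, hy⟩
          refine ⟨fun j => y j + y₀ j, fun i j => ?_⟩
          rw [hy i j, hP1 i, hy₀ i j]
          noncomm_ring

end T1

/-- Lemma 3.4(ii): if `M` and `N` are distinct maximal sets of the same type with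
`M ∩ N ≠ ∅`, then `M ∩ N = {A}` for a single matrix `A`, and (in the type one case)
there is an invertible `P` with `M = P·M₁ + A`, `N = P·M₂ + A`, resp. (in the type two case)
an invertible `Q` with `M = N₁·Q + A`, `N = N₂·Q + A`. -/
theorem maximal_sets_of_same_type
    {D : Type} [DivisionRing D] {m n : ℕ} (hm : 2 ≤ m) (hn : 2 ≤ n)
    (M N : Set (Matrix (Fin m) (Fin n) D))
    (htype : (IsTypeOne M ∧ IsTypeOne N) ∨ (IsTypeTwo M ∧ IsTypeTwo N))
    (hMN : M ≠ N) (hne : (M ∩ N).Nonempty) :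
    ∃ A : Matrix (Fin m) (Fin n) D, M ∩ N = {A} ∧
      ((IsTypeOne M ∧ IsTypeOne N) →
        ∃ P : Matrix (Fin m) (Fin m) D, IsUnit P ∧
          M = (fun X => P * X + A) '' M1set D m n ∧
          N = (fun X => P * X + A) '' M2set D m n) ∧
      ((IsTypeTwo M ∧ IsTypeTwo N) →
        ∃ Q : Matrix (Fin n) (Fin n) D, IsUnit Q ∧
          M = (fun X => X * Q + A) '' N1set D m n ∧
          N = (fun X => X * Q + A) '' N2set D m n) := by
  rcases htype with ⟨h1M, h1N⟩ | ⟨h2M, h2N⟩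
  · obtain ⟨A, hA, P, hP, hM1, hN1⟩ := typeOne_main hm hn h1M h1N hMN hne
    refine ⟨A, hA, fun _ => ⟨P, hP, hM1, hN1⟩, ?_⟩
    rintro ⟨h2M, h2N⟩
    obtain ⟨A', hA', Q, hQ, hM2, hN2⟩ := typeTwo_main hm hn h2M h2N hMN hne
    have hAA : A' = A := Set.singleton_eq_singleton_iff.mp (hA'.symm.trans hA)
    rw [hAA] at hM2 hN2
    exact ⟨Q, hQ, hM2, hN2⟩
  · obtain ⟨A, hA, Q, hQ, hM2, hN2⟩ := typeTwo_main hm hn h2M h2N hMN hne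
    refine ⟨A, hA, ?_, fun _ => ⟨Q, hQ, hM2, hN2⟩⟩
    rintro ⟨h1M, h1N⟩
    obtain ⟨A', hA', P, hP, hM1, hN1⟩ := typeOne_main hm hn h1M h1N hMN hne
    have hAA : A' = A := Set.singleton_eq_singleton_iff.mp (hA'.symm.trans hA)
    rw [hAA] at hM1 hN1
    exact ⟨P, hP, hM1, hN1⟩
end
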